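/- arXiv:1907.11120 — 2 statements merged into one kernel-verified Lean document; each statement's English description precedes it below -/
import Mathlib

section
/- Let Γ ⊆ Sym({1,…,n}) be a permutation group and let v ∈ S_d(Γ) be irreducible with representation T. Then v is flexible if and only if there exists an arrangement v̄ ∈ S_d(Γ) that is not equivalent to v and whose representation is isomorphic to T. -/
open Matrix

/-- The matrix of an arrangement of `n` points in `ℝ^d`: the `i`-th row is the point `v i`. -/
def arrMat {n d : ℕ} (v : Fin n → Fin d → ℝ) : Matrix (Fin n) (Fin d) ℝ := Matrix.of v

/-- An arrangement is normalized if `MᵀM` is the identity matrix. -/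
def IsNormalized {n d : ℕ} (v : Fin n → Fin d → ℝ) : Prop :=
  (arrMat v)ᵀ * arrMat v = 1

/-- The arrangement space of `v`: the column span of its matrix, a subspace of `ℝ^n`. -/
def arrSpace {n d : ℕ} (v : Fin n → Fin d → ℝ) : Submodule ℝ (Fin n → ℝ) :=
  Submodule.span ℝ (Set.range (arrMat v)ᵀ)

/-- `detPair v w = det (M_wᵀ * M_v)`, i.e. `det(v, w̄) = det(M̄ᵀ M)` with `w` playing `v̄`. -/
noncomputable def detPair {n d : ℕ} (v w : Fin n → Fin d → ℝ) : ℝ :=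
  ((arrMat w)ᵀ * arrMat v).det

/-- Two subspaces `U, W ⊆ ℝ^n` are orthogonal if `⟨u, w⟩ = 0` for all `u ∈ U`, `w ∈ W`. -/
def OrthSpaces {n : ℕ} (U W : Submodule ℝ (Fin n → ℝ)) : Prop :=
  ∀ u ∈ U, ∀ w ∈ W, u ⬝ᵥ w = 0

/-- Arrangements are equivalent if related by an invertible linear map `X`. -/
def AreEquivalent {n d : ℕ} (v w : Fin n → Fin d → ℝ) : Prop :=
  ∃ X : Matrix (Fin d) (Fin d) ℝ, X.det ≠ 0 ∧ ∀ i, X.mulVec (v i) = w i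

/-- Arrangements are positively equivalent if related by a linear map of positive determinant. -/
def PosEquivalent {n d : ℕ} (v w : Fin n → Fin d → ℝ) : Prop :=
  ∃ X : Matrix (Fin d) (Fin d) ℝ, 0 < X.det ∧ ∀ i, X.mulVec (v i) = w i

/-- `T : Γ → O(ℝ^d)` is a representation: orthogonal values and multiplicative. -/
def IsRep {n d : ℕ} (Γ : Subgroup (Equiv.Perm (Fin n)))
    (T : Γ → Matrix (Fin d) (Fin d) ℝ) : Prop :=
  (∀ φ, (T φ)ᵀ * T φ = 1) ∧ (∀ φ ψ, T (φ * ψ) = T φ * T ψ)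

/-- `T` is a representation of the arrangement `v`: `T_φ v_i = v_{φ(i)}`. -/
def IsRepOf {n d : ℕ} (Γ : Subgroup (Equiv.Perm (Fin n)))
    (T : Γ → Matrix (Fin d) (Fin d) ℝ) (v : Fin n → Fin d → ℝ) : Prop :=
  IsRep Γ T ∧ ∀ (φ : Γ) (i : Fin n), (T φ).mulVec (v i) = v (φ.val i)

/-- `v` is a `Γ`-arrangement if it has a representation. -/
def IsGammaArr {n d : ℕ} (Γ : Subgroup (Equiv.Perm (Fin n)))
    (v : Fin n → Fin d → ℝ) : Prop :=
  ∃ T : Γ → Matrix (Fin d) (Fin d) ℝ, IsRepOf Γ T v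

/-- A representation is irreducible if the only invariant subspaces of `ℝ^d` are `⊥` and `⊤`. -/
def IrredRep {n d : ℕ} (Γ : Subgroup (Equiv.Perm (Fin n)))
    (T : Γ → Matrix (Fin d) (Fin d) ℝ) : Prop :=
  ∀ W : Submodule ℝ (Fin d → ℝ), (∀ (φ : Γ), ∀ x ∈ W, (T φ).mulVec x ∈ W) → W = ⊥ ∨ W = ⊤

/-- Representations are isomorphic: an invertible equivariant map exists. -/
def IsoReps {n d : ℕ} (Γ : Subgroup (Equiv.Perm (Fin n)))
    (T T' : Γ → Matrix (Fin d) (Fin d) ℝ) : Prop :=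
  ∃ R : Matrix (Fin d) (Fin d) ℝ, R.det ≠ 0 ∧ ∀ φ, R * T φ = T' φ * R

/-- Representations are positively isomorphic: an equivariant map with positive determinant. -/
def PosIsoReps {n d : ℕ} (Γ : Subgroup (Equiv.Perm (Fin n)))
    (T T' : Γ → Matrix (Fin d) (Fin d) ℝ) : Prop :=
  ∃ R : Matrix (Fin d) (Fin d) ℝ, 0 < R.det ∧ ∀ φ, R * T φ = T' φ * R

/-- `S_d(Γ)`: the set of normalized `Γ`-arrangements of `n` points in `ℝ^d`. -/
def SdSet (n d : ℕ) (Γ : Subgroup (Equiv.Perm (Fin n))) : Set (Fin n → Fin d → ℝ) :=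
  {v | IsNormalized v ∧ IsGammaArr Γ v}

/-- Deformation equivalence: a continuous path in `S_d(Γ)` from `v` to `w`. -/
def DeformEquiv {n d : ℕ} (Γ : Subgroup (Equiv.Perm (Fin n)))
    (v w : Fin n → Fin d → ℝ) : Prop :=
  ∃ c : ℝ → (Fin n → Fin d → ℝ), ContinuousOn c (Set.Icc 0 1) ∧
    (∀ t ∈ Set.Icc (0:ℝ) 1, c t ∈ SdSet n d Γ) ∧ c 0 = v ∧ c 1 = w

/-- `v` is flexible if it can be deformed into some non-equivalent arrangement. -/
def Flexible {n d : ℕ} (Γ : Subgroup (Equiv.Perm (Fin n))) (v : Fin n → Fin d → ℝ) : Prop :=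
  ∃ w : Fin n → Fin d → ℝ, DeformEquiv Γ v w ∧ ¬ AreEquivalent v w

/-- A subspace `W ⊆ ℝ^n` is `Γ`-invariant (under the permutation action). -/
def GammaInvariant {n : ℕ} (Γ : Subgroup (Equiv.Perm (Fin n)))
    (W : Submodule ℝ (Fin n → ℝ)) : Prop :=
  ∀ (φ : Γ), ∀ x ∈ W, (fun i => x (φ.val⁻¹ i)) ∈ W

section Aux
variable {n d : ℕ} {Γ : Subgroup (Equiv.Perm (Fin n))}

lemma isRep_one {T : Γ → Matrix (Fin d) (Fin d) ℝ} (h : IsRep Γ T) : T 1 = 1 := by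
  have h1 : T 1 = T 1 * T 1 := by
    have := h.2 1 1
    rwa [mul_one] at this
  calc T 1 = 1 * T 1 := (one_mul _).symm
  _ = ((T 1)ᵀ * T 1) * T 1 := by rw [h.1 1]
  _ = (T 1)ᵀ * (T 1 * T 1) := by rw [Matrix.mul_assoc]
  _ = (T 1)ᵀ * T 1 := by rw [← h1]
  _ = 1 := h.1 1

lemma isRep_mul_inv {T : Γ → Matrix (Fin d) (Fin d) ℝ} (h : IsRep Γ T) (φ : Γ) :
    T φ * T φ⁻¹ = 1 := by
  rw [← h.2 φ φ⁻¹, mul_inv_cancel, isRep_one h]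

lemma isRep_transpose {T : Γ → Matrix (Fin d) (Fin d) ℝ} (h : IsRep Γ T) (φ : Γ) :
    (T φ)ᵀ = T φ⁻¹ := by
  calc (T φ)ᵀ = (T φ)ᵀ * (T φ * T φ⁻¹) := by rw [isRep_mul_inv h, mul_one]
  _ = ((T φ)ᵀ * T φ) * T φ⁻¹ := by rw [Matrix.mul_assoc]
  _ = T φ⁻¹ := by rw [h.1 φ, one_mul]

/-- Gram-type matrix `MₓᵀM_y`. -/
def gram (x y : Fin n → Fin d → ℝ) : Matrix (Fin d) (Fin d) ℝ :=
  Matrix.of fun k l => ∑ i, x i k * y i l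

lemma gram_transpose (x y : Fin n → Fin d → ℝ) : (gram x y)ᵀ = gram y x := by
  ext k l
  simp [_root_.gram, mul_comm]

lemma isNormalized_iff_gram {x : Fin n → Fin d → ℝ} :
    IsNormalized x ↔ gram x x = 1 := by
  constructor <;> intro h
  · ext k l
    have := congrFun (congrFun h k) l
    simpa [arrMat, Matrix.mul_apply, _root_.gram] using this
  · ext k l
    have := congrFun (congrFun h k) l
    simpa [arrMat, Matrix.mul_apply, _root_.gram] using this

/-- If `y` is `T`-equivariant, then `∑ m, T φ m l * y i m = y (φ⁻¹ i) l`. -/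
lemma equivariant_transpose_apply {T : Γ → Matrix (Fin d) (Fin d) ℝ} {y : Fin n → Fin d → ℝ}
    (hrep : IsRep Γ T) (hy : ∀ (φ : Γ) i, (T φ).mulVec (y i) = y (φ.val i)) (φ : Γ)
    (i : Fin n) (l : Fin d) : (∑ m, T φ m l * y i m) = y ((φ.val)⁻¹ i) l := by
  have h1 : ((T φ)ᵀ).mulVec (y i) = y ((φ⁻¹ : Γ).val i) := by
    rw [isRep_transpose hrep, hy φ⁻¹ i]
  have h2 := congrFun h1 l
  have h3 : ((φ⁻¹ : Γ).val : Equiv.Perm (Fin n)) = (φ.val)⁻¹ := rfl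
  rw [h3] at h2
  simpa [Matrix.mulVec, dotProduct, Matrix.transpose_apply] using h2

lemma gram_comm {T : Γ → Matrix (Fin d) (Fin d) ℝ} {x y : Fin n → Fin d → ℝ}
    (hrep : IsRep Γ T)
    (hx : ∀ (φ : Γ) i, (T φ).mulVec (x i) = x (φ.val i))
    (hy : ∀ (φ : Γ) i, (T φ).mulVec (y i) = y (φ.val i)) (φ : Γ) :
    T φ * gram x y = gram x y * T φ := by
  ext k l
  have lhs : (T φ * gram x y) k l = ∑ i, x (φ.val i) k * y i l := by
    rw [Matrix.mul_apply]
    simp only [_root_.gram, Matrix.of_apply, Finset.mul_sum]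
    rw [Finset.sum_comm]
    refine Finset.sum_congr rfl fun i _ => ?_
    have : (∑ m, T φ k m * (x i m * y i l)) = (∑ m, T φ k m * x i m) * y i l := by
      rw [Finset.sum_mul]; exact Finset.sum_congr rfl fun m _ => by ring
    rw [this]
    have hx' := congrFun (hx φ i) k
    simp only [Matrix.mulVec, dotProduct] at hx'
    rw [hx']
  have rhs : (gram x y * T φ) k l = ∑ i, x (φ.val i) k * y i l := by
    rw [Matrix.mul_apply]
    simp only [_root_.gram, Matrix.of_apply, Finset.sum_mul]
    rw [Finset.sum_comm]
    have step : ∀ i, (∑ m, x i k * y i m * T φ m l) = x i k * y ((φ.val)⁻¹ i) l := by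
      intro i
      rw [show (∑ m, x i k * y i m * T φ m l) = x i k * ∑ m, T φ m l * y i m by
        rw [Finset.mul_sum]; exact Finset.sum_congr rfl fun m _ => by ring]
      rw [equivariant_transpose_apply hrep hy φ i l]
    rw [Finset.sum_congr rfl fun i _ => step i]
    calc (∑ i, x i k * y ((φ.val)⁻¹ i) l)
        = ∑ i, x (φ.val i) k * y ((φ.val)⁻¹ (φ.val i)) l :=
          (Equiv.sum_comp (φ.val : Equiv.Perm (Fin n)) fun i => x i k * y ((φ.val)⁻¹ i) l).symm
      _ = ∑ i, x (φ.val i) k * y i l := by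
          refine Finset.sum_congr rfl fun i _ => ?_
          rw [← Equiv.Perm.mul_apply, inv_mul_cancel, Equiv.Perm.one_apply]
  rw [lhs, rhs]

end Aux
section Aux2
variable {n d : ℕ} {Γ : Subgroup (Equiv.Perm (Fin n))}

lemma matrix_eq_zero_of_mulVec_eq_zero {M : Matrix (Fin d) (Fin d) ℝ}
    (h : ∀ y : Fin d → ℝ, M.mulVec y = 0) : M = 0 := by
  ext k l
  have := congrFun (h (Pi.single l 1)) k
  simpa [Matrix.mulVec_single] using this

/-- Schur: a symmetric matrix commuting with an irreducible representation is scalar. -/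
lemma comm_symm_scalar (hd : 0 < d) {T : Γ → Matrix (Fin d) (Fin d) ℝ}
    (hTirr : IrredRep Γ T) {B : Matrix (Fin d) (Fin d) ℝ} (hsym : Bᵀ = B)
    (hcomm : ∀ φ : Γ, T φ * B = B * T φ) :
    ∃ μ : ℝ, B = μ • (1 : Matrix (Fin d) (Fin d) ℝ) := by
  have hherm : B.IsHermitian := by
    rw [Matrix.IsHermitian]
    have : Bᴴ = Bᵀ := by
      ext i j; simp [Matrix.conjTranspose_apply]
    rw [this, hsym]
  set j0 : Fin d := ⟨0, hd⟩
  set μ := hherm.eigenvalues j0 with hμ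
  set x : Fin d → ℝ := ⇑(hherm.eigenvectorBasis j0) with hxdef
  have hx : B.mulVec x = μ • x := hherm.mulVec_eigenvectorBasis j0
  have hxne : x ≠ 0 := by
    intro h0
    exact hherm.eigenvectorBasis.orthonormal.ne_zero j0 (by ext i; exact congrFun h0 i)
  set W : Submodule ℝ (Fin d → ℝ) := LinearMap.ker (B - μ • (1 : Matrix (Fin d) (Fin d) ℝ)).mulVecLin with hW
  have hcomm' : ∀ φ : Γ, (B - μ • 1) * T φ = T φ * (B - μ • 1) := by
    intro φ
    rw [Matrix.sub_mul, Matrix.mul_sub, hcomm φ]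
    congr 1
    rw [Matrix.smul_mul, Matrix.mul_smul, Matrix.one_mul, Matrix.mul_one]
  have hinv : ∀ (φ : Γ), ∀ y ∈ W, (T φ).mulVec y ∈ W := by
    intro φ y hy
    simp only [hW, LinearMap.mem_ker, Matrix.mulVecLin_apply] at hy ⊢
    rw [Matrix.mulVec_mulVec, hcomm' φ, ← Matrix.mulVec_mulVec, hy, Matrix.mulVec_zero]
  have hxW : x ∈ W := by
    simp only [hW, LinearMap.mem_ker, Matrix.mulVecLin_apply]
    rw [Matrix.sub_mulVec, hx, Matrix.smul_mulVec, Matrix.one_mulVec, sub_self]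
  rcases hTirr W hinv with hbot | htop
  · exact absurd (hbot ▸ hxW) (by simpa [Submodule.mem_bot] using hxne)
  · refine ⟨μ, ?_⟩
    have hz : B - μ • 1 = 0 := by
      apply matrix_eq_zero_of_mulVec_eq_zero
      intro y
      have : y ∈ W := htop ▸ Submodule.mem_top
      simpa only [hW, LinearMap.mem_ker, Matrix.mulVecLin_apply] using this
    exact sub_eq_zero.mp hz
end Aux2
section Aux3
variable {n d : ℕ} {Γ : Subgroup (Equiv.Perm (Fin n))}

lemma gram_eq_mul (x y : Fin n → Fin d → ℝ) : gram x y = (arrMat x)ᵀ * arrMat y := by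
  ext k l
  simp [_root_.gram, arrMat, Matrix.mul_apply]

lemma gram_smul (r s : ℝ) (x y : Fin n → Fin d → ℝ) :
    gram (r • x) (s • y) = (r * s) • gram x y := by
  ext k l
  simp only [_root_.gram, Matrix.of_apply, Pi.smul_apply, smul_eq_mul, Matrix.smul_apply,
    Finset.mul_sum]
  exact Finset.sum_congr rfl fun i _ => by ring

lemma gram_combo (a b : ℝ) (x y : Fin n → Fin d → ℝ) :
    gram (a • x + b • y) (a • x + b • y) =
      (a * a) • gram x x + (a * b) • (gram x y + gram y x) + (b * b) • gram y y := by
  ext k l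
  simp only [_root_.gram, Matrix.of_apply, Pi.add_apply, Pi.smul_apply, smul_eq_mul,
    Matrix.add_apply, Matrix.smul_apply, Finset.mul_sum, ← Finset.sum_add_distrib]
  exact Finset.sum_congr rfl fun i _ => by ring

lemma areEquivalent_comp {v u w : Fin n → Fin d → ℝ}
    (h1 : AreEquivalent v u) (h2 : AreEquivalent u w) : AreEquivalent v w := by
  obtain ⟨X, hX, hX1⟩ := h1
  obtain ⟨Y, hY, hY1⟩ := h2
  refine ⟨Y * X, by simp [Matrix.det_mul, hX, hY], fun i => ?_⟩
  rw [← Matrix.mulVec_mulVec, hX1, hY1]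

set_option maxHeartbeats 1600000 in
/-- The backward direction: an isomorphic non-equivalent arrangement yields flexibility. -/
lemma flexible_of_iso (hd : 0 < d) {v w : Fin n → Fin d → ℝ}
    {T T' : Γ → Matrix (Fin d) (Fin d) ℝ}
    (hv : v ∈ SdSet n d Γ) (hT : IsRepOf Γ T v) (hTirr : IrredRep Γ T)
    (hw : w ∈ SdSet n d Γ) (hne : ¬ AreEquivalent v w) (hT' : IsRepOf Γ T' w)
    (hiso : IsoReps Γ T T') : Flexible Γ v := by
  classical
  obtain ⟨R, hRdet, hRcomm⟩ := hiso
  have hRu : IsUnit R.det := isUnit_iff_ne_zero.mpr hRdet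
  have hTR : ∀ φ : Γ, T φ * R⁻¹ = R⁻¹ * T' φ := by
    intro φ
    calc T φ * R⁻¹ = (R⁻¹ * R) * T φ * R⁻¹ := by rw [Matrix.nonsing_inv_mul R hRu, one_mul]
    _ = R⁻¹ * (R * T φ) * R⁻¹ := by rw [Matrix.mul_assoc R⁻¹ R (T φ)]
    _ = R⁻¹ * (T' φ * R) * R⁻¹ := by rw [hRcomm φ]
    _ = R⁻¹ * T' φ * (R * R⁻¹) := by rw [Matrix.mul_assoc, Matrix.mul_assoc, Matrix.mul_assoc]
    _ = R⁻¹ * T' φ := by rw [Matrix.mul_nonsing_inv R hRu, mul_one]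
  set u : Fin n → Fin d → ℝ := fun i => R⁻¹.mulVec (w i) with hu_def
  have hu : ∀ (φ : Γ) i, (T φ).mulVec (u i) = u (φ.val i) := by
    intro φ i
    calc (T φ).mulVec (u i) = (T φ * R⁻¹).mulVec (w i) := by
          rw [← Matrix.mulVec_mulVec]
    _ = (R⁻¹ * T' φ).mulVec (w i) := by rw [hTR φ]
    _ = R⁻¹.mulVec ((T' φ).mulVec (w i)) := by rw [← Matrix.mulVec_mulVec]
    _ = u (φ.val i) := by rw [hT'.2 φ i]
  set B := gram u u with hB_def
  have hBsym : Bᵀ = B := gram_transpose u u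
  have hBcomm : ∀ φ : Γ, T φ * B = B * T φ := fun φ => gram_comm hT.1 hu hu φ
  obtain ⟨μ, hB⟩ := comm_symm_scalar hd hTirr hBsym hBcomm
  -- B = R⁻¹ * (R⁻¹)ᵀ
  have harr : arrMat u = arrMat w * (R⁻¹)ᵀ := by
    ext i j
    simp [arrMat, hu_def, Matrix.mul_apply, Matrix.mulVec, dotProduct, Matrix.transpose_apply,
      mul_comm]
  have hBmul : B = R⁻¹ * (R⁻¹)ᵀ := by
    rw [hB_def, gram_eq_mul, harr, Matrix.transpose_mul, Matrix.transpose_transpose]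
    calc R⁻¹ * (arrMat w)ᵀ * (arrMat w * (R⁻¹)ᵀ)
        = R⁻¹ * ((arrMat w)ᵀ * arrMat w) * (R⁻¹)ᵀ := by
          rw [Matrix.mul_assoc, Matrix.mul_assoc, Matrix.mul_assoc]
    _ = R⁻¹ * (R⁻¹)ᵀ := by rw [hw.1, mul_one]
  have hRinvdet : (R⁻¹).det ≠ 0 := by
    rw [Matrix.det_nonsing_inv, Ring.inverse_eq_inv']
    exact inv_ne_zero hRdet
  have hBdet : B.det ≠ 0 := by
    rw [hBmul, Matrix.det_mul, Matrix.det_transpose]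
    exact mul_ne_zero hRinvdet hRinvdet
  set j0 : Fin d := ⟨0, hd⟩
  have hμ0 : μ ≠ 0 := by
    intro h
    rw [h, zero_smul] at hB
    rw [hB] at hBdet
    exact hBdet (by haveI : Nonempty (Fin d) := ⟨j0⟩; exact Matrix.det_zero)
  have hμnonneg : 0 ≤ μ := by
    have h1 : B j0 j0 = ∑ i, u i j0 * u i j0 := rfl
    have h2 : B j0 j0 = μ := by rw [hB]; simp [Matrix.one_apply]
    have h3 : 0 ≤ ∑ i, u i j0 * u i j0 :=
      Finset.sum_nonneg fun i _ => mul_self_nonneg _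
    rw [h1] at h2; linarith
  have hμpos : 0 < μ := lt_of_le_of_ne hμnonneg (Ne.symm hμ0)
  set r : ℝ := Real.sqrt μ with hr_def
  have hrpos : 0 < r := Real.sqrt_pos.mpr hμpos
  have hrr : r * r = μ := Real.mul_self_sqrt hμpos.le
  set u' : Fin n → Fin d → ℝ := r⁻¹ • u with hu'_def
  have hu' : ∀ (φ : Γ) i, (T φ).mulVec (u' i) = u' (φ.val i) := by
    intro φ i
    show (T φ).mulVec (r⁻¹ • u i) = r⁻¹ • u (φ.val i)
    rw [Matrix.mulVec_smul, hu φ i]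
  have hgram_u' : gram u' u' = 1 := by
    rw [hu'_def, gram_smul, ← hB_def, hB, smul_smul]
    rw [show r⁻¹ * r⁻¹ * μ = 1 by field_simp [hrr.symm ▸ hμ0]; nlinarith [hrr]]
    rw [one_smul]
  have hu'mem : u' ∈ SdSet n d Γ := ⟨isNormalized_iff_gram.mpr hgram_u', ⟨T, hT.1, hu'⟩⟩
  -- u' is equivalent to w, hence not equivalent to v
  have hu'w : AreEquivalent u' w := by
    refine ⟨r • R, ?_, fun i => ?_⟩
    · rw [Matrix.det_smul]
      exact mul_ne_zero (pow_ne_zero _ (ne_of_gt hrpos)) hRdet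
    · show (r • R).mulVec (r⁻¹ • u i) = w i
      rw [Matrix.mulVec_smul, Matrix.smul_mulVec, smul_smul,
        inv_mul_cancel₀ (ne_of_gt hrpos), one_smul, hu_def]
      show R.mulVec (R⁻¹.mulVec (w i)) = w i
      rw [Matrix.mulVec_mulVec, Matrix.mul_nonsing_inv R hRu, Matrix.one_mulVec]
  have hvu' : ¬ AreEquivalent v u' := fun h => hne (areEquivalent_comp h hu'w)
  -- the symmetric part of gram v u' is a scalar
  have hSsym : (gram v u' + gram u' v)ᵀ = gram v u' + gram u' v := by
    rw [Matrix.transpose_add, gram_transpose, gram_transpose, add_comm]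
  have hScomm : ∀ φ : Γ, T φ * (gram v u' + gram u' v) = (gram v u' + gram u' v) * T φ := by
    intro φ
    rw [Matrix.mul_add, Matrix.add_mul, gram_comm hT.1 hT.2 hu' φ, gram_comm hT.1 hu' hT.2 φ]
  obtain ⟨c2, hc2⟩ := comm_symm_scalar hd hTirr hSsym hScomm
  have hgram_v : gram v v = 1 := isNormalized_iff_gram.mp hv.1
  -- c2 > -2
  have hc2sum : gram (v + u') (v + u') = (2 + c2) • 1 := by
    have hcombo := gram_combo 1 1 v u'
    simp only [one_smul, one_mul] at hcombo
    rw [hcombo, hgram_v, hgram_u', hc2]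
    rw [show ((1:Matrix (Fin d) (Fin d) ℝ) + c2 • 1 + 1) = (2 + c2) • 1 by
      rw [add_smul]; module]
  have hc2ge : -2 ≤ c2 := by
    have h1 : gram (v + u') (v + u') j0 j0 = 2 + c2 := by
      rw [hc2sum]; simp [Matrix.one_apply]
    have h2 : gram (v + u') (v + u') j0 j0 = ∑ i, (v + u') i j0 * (v + u') i j0 := rfl
    have h3 : 0 ≤ ∑ i, (v + u') i j0 * (v + u') i j0 :=
      Finset.sum_nonneg fun i _ => mul_self_nonneg _
    rw [h2] at h1; linarith
  have hc2gt : -2 < c2 := by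
    rcases eq_or_lt_of_le hc2ge with h | h
    · exfalso
      have hz : gram (v + u') (v + u') = 0 := by
        rw [hc2sum, ← h]; simp
      have hvu : v + u' = 0 := by
        funext i k
        have h1 : gram (v + u') (v + u') k k = ∑ j, (v + u') j k * (v + u') j k := rfl
        have h2 : (∑ j, (v + u') j k * (v + u') j k) = 0 := by
          rw [← h1, hz]; simp
        have h3 := (Finset.sum_eq_zero_iff_of_nonneg
          (fun j _ => mul_self_nonneg ((v + u') j k))).mp h2 i (Finset.mem_univ i)
        have := mul_self_eq_zero.mp h3
        simpa using this
      apply hvu'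
      refine ⟨-1, ?_, fun i => ?_⟩
      · simp [Matrix.det_neg]
      · have : u' i = -(v i) := by
          have := congrFun hvu i
          funext k
          have h4 := congrFun this k
          simp only [Pi.add_apply, Pi.zero_apply] at h4
          simp only [Pi.neg_apply]; linarith
        rw [this]
        show (-(1 : Matrix (Fin d) (Fin d) ℝ)).mulVec (v i) = -(v i)
        rw [Matrix.neg_mulVec, Matrix.one_mulVec]
    · exact h
  -- the deformation path
  set g : ℝ → ℝ := fun t => 1 + c2 / 2 * Real.sin (Real.pi * t) with hg_def
  have hgpos : ∀ t ∈ Set.Icc (0:ℝ) 1, 0 < g t := by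
    intro t ht
    have hs0 : 0 ≤ Real.sin (Real.pi * t) :=
      Real.sin_nonneg_of_nonneg_of_le_pi (by nlinarith [Real.pi_pos, ht.1])
        (by nlinarith [Real.pi_pos, ht.2])
    have hs1 : Real.sin (Real.pi * t) ≤ 1 := Real.sin_le_one _
    show 0 < 1 + c2 / 2 * Real.sin (Real.pi * t)
    set s := Real.sin (Real.pi * t)
    rcases le_or_gt 0 c2 with h | h
    · nlinarith
    · nlinarith [mul_le_mul_of_nonpos_left hs1 (le_of_lt (show c2/2 < 0 by linarith))]
  set γ : ℝ → ℝ := fun t => (Real.sqrt (g t))⁻¹ with hγ_def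
  set path : ℝ → (Fin n → Fin d → ℝ) := fun t =>
    γ t • (Real.cos (Real.pi * t / 2) • v + Real.sin (Real.pi * t / 2) • u') with hpath_def
  refine ⟨u', ⟨path, ?_, ?_, ?_, ?_⟩, hvu'⟩
  · -- continuity
    have hgc : Continuous g := by
      apply Continuous.add continuous_const
      exact continuous_const.mul (Real.continuous_sin.comp (continuous_const.mul continuous_id))
    have hγc : ContinuousOn γ (Set.Icc 0 1) := by
      apply ContinuousOn.inv₀
      · exact (Real.continuous_sqrt.comp hgc).continuousOn
      · intro t ht
        exact ne_of_gt (Real.sqrt_pos.mpr (hgpos t ht))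
    have hzc : Continuous fun t =>
        Real.cos (Real.pi * t / 2) • v + Real.sin (Real.pi * t / 2) • u' := by
      apply Continuous.add
      · exact (Real.continuous_cos.comp ((continuous_const.mul continuous_id).div_const 2)).smul continuous_const
      · exact (Real.continuous_sin.comp ((continuous_const.mul continuous_id).div_const 2)).smul continuous_const
    exact hγc.smul hzc.continuousOn
  · -- membership
    intro t ht
    have hgt := hgpos t ht
    set a := Real.cos (Real.pi * t / 2) with ha_def
    set b := Real.sin (Real.pi * t / 2) with hb_def
    have hab : a * a + b * b = 1 := by
      have h := Real.sin_sq_add_cos_sq (Real.pi * t / 2)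
      nlinarith [h]
    have h2ab : 2 * (b * a) = Real.sin (Real.pi * t) := by
      rw [show Real.pi * t = 2 * (Real.pi * t / 2) by ring, Real.sin_two_mul]
      rw [ha_def, hb_def]; ring
    have hsc : (γ t * γ t) * (a * a + a * b * c2 + b * b) = 1 := by
      have h1 : a * a + a * b * c2 + (b * b) = g t := by
        rw [hg_def]
        show a * a + a * b * c2 + b * b = 1 + c2 / 2 * Real.sin (Real.pi * t)
        nlinarith [h2ab, hab]
      rw [h1, hγ_def]
      show (Real.sqrt (g t))⁻¹ * (Real.sqrt (g t))⁻¹ * g t = 1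
      have hs := Real.sqrt_pos.mpr hgt
      rw [← Real.mul_self_sqrt hgt.le]
      field_simp
      rw [Real.sqrt_sq hs.le]
    constructor
    · apply isNormalized_iff_gram.mpr
      show gram (γ t • (a • v + b • u')) (γ t • (a • v + b • u')) = 1
      rw [gram_smul, gram_combo, hgram_v, hgram_u', hc2]
      rw [show (a * a) • (1 : Matrix (Fin d) (Fin d) ℝ) + (a * b) • c2 • 1 + (b * b) • 1
          = (a * a + a * b * c2 + b * b) • 1 by
        rw [smul_smul, ← add_smul, ← add_smul]]
      rw [smul_smul, hsc, one_smul]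
    · refine ⟨T, hT.1, fun φ i => ?_⟩
      show (T φ).mulVec (γ t • (a • v i + b • u' i)) = γ t • (a • v (φ.val i) + b • u' (φ.val i))
      rw [Matrix.mulVec_smul, Matrix.mulVec_add, Matrix.mulVec_smul, Matrix.mulVec_smul,
        hT.2 φ i, hu' φ i]
  · -- path 0 = v
    show γ 0 • (Real.cos (Real.pi * 0 / 2) • v + Real.sin (Real.pi * 0 / 2) • u') = v
    rw [hγ_def]
    show (Real.sqrt (g 0))⁻¹ • (Real.cos (Real.pi * 0 / 2) • v + Real.sin (Real.pi * 0 / 2) • u') = v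
    rw [hg_def]
    norm_num [Real.sqrt_one]
  · -- path 1 = u'
    show γ 1 • (Real.cos (Real.pi * 1 / 2) • v + Real.sin (Real.pi * 1 / 2) • u') = u'
    rw [hγ_def]
    show (Real.sqrt (g 1))⁻¹ • (Real.cos (Real.pi * 1 / 2) • v + Real.sin (Real.pi * 1 / 2) • u') = u'
    rw [hg_def]
    norm_num [Real.sqrt_one, Real.sin_pi, Real.cos_pi_div_two, Real.sin_pi_div_two]
end Aux3
section Aux4
variable {n d : ℕ} {Γ : Subgroup (Equiv.Perm (Fin n))}

/-- The canonical representation formula of a normalized arrangement. -/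
def repF (Γ : Subgroup (Equiv.Perm (Fin n))) (x : Fin n → Fin d → ℝ) (φ : Γ) :
    Matrix (Fin d) (Fin d) ℝ :=
  Matrix.of fun k l => ∑ i, x (φ.val i) k * x i l

lemma rep_eq_repF {x : Fin n → Fin d → ℝ} {S : Γ → Matrix (Fin d) (Fin d) ℝ}
    (hxn : IsNormalized x) (hS : IsRepOf Γ S x) (φ : Γ) : S φ = repF Γ x φ := by
  have hgram : gram x x = 1 := isNormalized_iff_gram.mp hxn
  ext k l
  show S φ k l = ∑ i, x (φ.val i) k * x i l
  have h1 : ∀ i, x (φ.val i) k = ∑ j, S φ k j * x i j := by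
    intro i
    have := congrFun (hS.2 φ i) k
    simp only [Matrix.mulVec, dotProduct] at this
    exact this.symm
  calc S φ k l = ∑ j, S φ k j * (1 : Matrix (Fin d) (Fin d) ℝ) j l := by
        simp [Matrix.one_apply, mul_ite]
  _ = ∑ j, S φ k j * gram x x j l := by rw [hgram]
  _ = ∑ j, S φ k j * ∑ i, x i j * x i l := rfl
  _ = ∑ j, ∑ i, S φ k j * (x i j * x i l) := by
        exact Finset.sum_congr rfl fun j _ => Finset.mul_sum _ _ _
  _ = ∑ i, ∑ j, S φ k j * (x i j * x i l) := Finset.sum_comm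
  _ = ∑ i, (∑ j, S φ k j * x i j) * x i l := by
        refine Finset.sum_congr rfl fun i _ => ?_
        rw [Finset.sum_mul]
        exact Finset.sum_congr rfl fun j _ => by ring
  _ = ∑ i, x (φ.val i) k * x i l := by
        exact Finset.sum_congr rfl fun i _ => by rw [← h1 i]

lemma isRepOf_repF {x : Fin n → Fin d → ℝ} (hx : x ∈ SdSet n d Γ) :
    IsRepOf Γ (repF Γ x) x := by
  obtain ⟨S, hS⟩ := hx.2
  have : repF Γ x = S := funext fun φ => (rep_eq_repF hx.1 hS φ).symm
  rw [this]
  exact hS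

/-- The trace of an idempotent real matrix is a natural number (its rank). -/
lemma idem_trace_eq_finrank {m : Type*} [Fintype m] [DecidableEq m] {P : Matrix m m ℝ}
    (h : P * P = P) :
    P.trace = (Module.finrank ℝ (LinearMap.range P.mulVecLin) : ℝ) := by
  have hproj : LinearMap.IsProj (LinearMap.range P.mulVecLin) P.mulVecLin := by
    refine ⟨fun x => LinearMap.mem_range_self _ x, ?_⟩
    rintro x ⟨y, rfl⟩
    have := congrArg (Matrix.mulVecLin) h
    rw [Matrix.mulVecLin_mul] at this
    exact congrFun (congrArg DFunLike.coe this) y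
  have htr := hproj.trace
  rw [← htr]
  rw [LinearMap.trace_eq_matrix_trace ℝ (Pi.basisFun ℝ m)]
  congr 1
  ext i j
  rw [LinearMap.toMatrix_apply]
  simp [Matrix.mulVecLin_apply, Matrix.mulVec_single, Pi.basisFun_apply, Pi.basisFun_repr]

/-- A continuous function on `[0,1]` taking natural number values is constant. -/
lemma nat_valued_const {f : ℝ → ℝ} (hc : ContinuousOn f (Set.Icc 0 1))
    (hint : ∀ t ∈ Set.Icc (0:ℝ) 1, ∃ r : ℕ, f t = r) : f 1 = f 0 := by
  by_contra hne
  have h01 : (0:ℝ) ≤ 1 := zero_le_one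
  rcases lt_or_gt_of_ne hne with h | h
  · obtain ⟨y, hy, hy1, hy2⟩ := exists_irrational_btwn h
    have : y ∈ Set.Icc (f 1) (f 0) := ⟨le_of_lt hy1, le_of_lt hy2⟩
    obtain ⟨t, ht, hft⟩ := intermediate_value_Icc' h01 hc this
    obtain ⟨r, hr⟩ := hint t ht
    rw [hft] at hr
    exact (Nat.not_irrational r) (hr ▸ hy)
  · obtain ⟨y, hy, hy1, hy2⟩ := exists_irrational_btwn h
    have : y ∈ Set.Icc (f 0) (f 1) := ⟨le_of_lt hy1, le_of_lt hy2⟩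
    obtain ⟨t, ht, hft⟩ := intermediate_value_Icc h01 hc this
    obtain ⟨r, hr⟩ := hint t ht
    rw [hft] at hr
    exact (Nat.not_irrational r) (hr ▸ hy)
end Aux4
section Aux5
variable {n d : ℕ} {Γ : Subgroup (Equiv.Perm (Fin n))}

/-- `bigP A B` is the vectorized form of `X ↦ A * X * B`. -/
def bigP (A B : Matrix (Fin d) (Fin d) ℝ) :
    Matrix (Fin d × Fin d) (Fin d × Fin d) ℝ :=
  Matrix.of fun pq kl => A pq.1 kl.1 * B kl.2 pq.2

lemma bigP_mul (A B A' B' : Matrix (Fin d) (Fin d) ℝ) :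
    bigP A B * bigP A' B' = bigP (A * A') (B' * B) := by
  ext ⟨p, q⟩ ⟨k, l⟩
  show (∑ rs : Fin d × Fin d, (A p rs.1 * B rs.2 q) * (A' rs.1 k * B' l rs.2))
    = (∑ r, A p r * A' r k) * (∑ s, B' l s * B s q)
  rw [Finset.sum_mul_sum, Fintype.sum_prod_type]
  exact Finset.sum_congr rfl fun r _ => Finset.sum_congr rfl fun s _ => by ring

lemma bigP_trace (A B : Matrix (Fin d) (Fin d) ℝ) :
    (bigP A B).trace = A.trace * B.trace := by
  show (∑ pq : Fin d × Fin d, A pq.1 pq.1 * B pq.2 pq.2) = (∑ p, A p p) * (∑ q, B q q)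
  rw [Finset.sum_mul_sum, Fintype.sum_prod_type]

lemma bigP_mulVec (A B X : Matrix (Fin d) (Fin d) ℝ) :
    (bigP A B).mulVec (fun kl => X kl.1 kl.2) = fun pq => (A * X * B) pq.1 pq.2 := by
  funext ⟨p, q⟩
  show (∑ kl : Fin d × Fin d, (A p kl.1 * B kl.2 q) * X kl.1 kl.2) = (A * X * B) p q
  rw [Fintype.sum_prod_type]
  show _ = ∑ l, (∑ k, A p k * X k l) * B l q
  rw [Finset.sum_comm]
  refine Finset.sum_congr rfl fun k _ => ?_
  rw [Finset.sum_mul]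
  exact Finset.sum_congr rfl fun l _ => by ring

variable [Fintype Γ]

/-- The averaged projection onto the space of intertwiners from `T` to `S`. -/
noncomputable def avgM (S T : Γ → Matrix (Fin d) (Fin d) ℝ) :
    Matrix (Fin d × Fin d) (Fin d × Fin d) ℝ :=
  ((Fintype.card Γ : ℝ))⁻¹ • ∑ φ : Γ, bigP (S φ) (T φ⁻¹)

lemma avgM_idem {S T : Γ → Matrix (Fin d) (Fin d) ℝ}
    (hS : IsRep Γ S) (hT : IsRep Γ T) : avgM S T * avgM S T = avgM S T := by
  have hcard : (0:ℝ) < (Fintype.card Γ : ℝ) := by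
    exact_mod_cast Fintype.card_pos
  rw [avgM, Matrix.smul_mul, Matrix.mul_smul, smul_smul, Finset.sum_mul]
  have key : ∀ φ : Γ, (bigP (S φ) (T φ⁻¹) * ∑ ψ : Γ, bigP (S ψ) (T ψ⁻¹))
      = ∑ χ : Γ, bigP (S χ) (T χ⁻¹) := by
    intro φ
    rw [Finset.mul_sum]
    refine Fintype.sum_equiv (Equiv.mulLeft φ) _ _ fun ψ => ?_
    show bigP (S φ) (T φ⁻¹) * bigP (S ψ) (T ψ⁻¹) = bigP (S (φ * ψ)) (T (φ * ψ)⁻¹)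
    rw [bigP_mul, ← hS.2, ← hT.2, _root_.mul_inv_rev]
  rw [Finset.sum_congr rfl fun φ _ => key φ, Finset.sum_const, Finset.card_univ]
  rw [← Nat.cast_smul_eq_nsmul ℝ, smul_smul]
  congr 1
  field_simp

/-- The averaged intertwiner built from `X`. -/
noncomputable def avgR (S T : Γ → Matrix (Fin d) (Fin d) ℝ) (X : Matrix (Fin d) (Fin d) ℝ) :
    Matrix (Fin d) (Fin d) ℝ :=
  ((Fintype.card Γ : ℝ))⁻¹ • ∑ φ : Γ, S φ * X * T φ⁻¹

lemma avgR_intertwines {S T : Γ → Matrix (Fin d) (Fin d) ℝ}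
    (hS : IsRep Γ S) (hT : IsRep Γ T) (X : Matrix (Fin d) (Fin d) ℝ) (ψ : Γ) :
    S ψ * avgR S T X = avgR S T X * T ψ := by
  rw [avgR, Matrix.mul_smul, Matrix.smul_mul, Finset.mul_sum, Finset.sum_mul]
  congr 1
  refine Fintype.sum_equiv (Equiv.mulLeft ψ) _ _ fun φ => ?_
  show S ψ * (S φ * X * T φ⁻¹) = S (ψ * φ) * X * T (ψ * φ)⁻¹ * T ψ
  have h1 : T (ψ * φ)⁻¹ * T ψ = T φ⁻¹ := by
    rw [← hT.2]
    congr 1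
    group
  rw [hS.2 ψ φ, ← h1]
  simp only [Matrix.mul_assoc]

lemma mul_stdBasis_mul (A B : Matrix (Fin d) (Fin d) ℝ) (k l p q : Fin d) :
    (A * Matrix.single k l (1:ℝ) * B) p q = A p k * B l q := by
  rw [Matrix.mul_apply]
  rw [Finset.sum_eq_single l]
  · rw [Matrix.mul_single_apply_same, mul_one]
  · intro j _ hj
    rw [Matrix.mul_single_apply_of_ne (hbj := hj), zero_mul]
  · intro h
    exact absurd (Finset.mem_univ l) h

lemma avgR_entry (S T : Γ → Matrix (Fin d) (Fin d) ℝ) (k l p q : Fin d) :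
    avgR S T (Matrix.single k l (1:ℝ)) p q = avgM S T (p, q) (k, l) := by
  rw [avgR, avgM]
  simp only [Matrix.smul_apply, smul_eq_mul]
  congr 1
  rw [Matrix.sum_apply, Matrix.sum_apply]
  refine Finset.sum_congr rfl fun φ _ => ?_
  rw [mul_stdBasis_mul]
  rfl
end Aux5
section Aux6
variable {n d : ℕ} {Γ : Subgroup (Equiv.Perm (Fin n))}

lemma sum_mulVec' {ι m' : Type*} [Fintype m'] (s : Finset ι) (f : ι → Matrix m' m' ℝ)
    (x : m' → ℝ) : (∑ i ∈ s, f i) *ᵥ x = ∑ i ∈ s, f i *ᵥ x := by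
  funext p
  simp only [Matrix.mulVec, dotProduct, Matrix.sum_apply, Finset.sum_apply, Finset.sum_mul]
  exact Finset.sum_comm

variable [Fintype Γ]

lemma trace_avgM (S T : Γ → Matrix (Fin d) (Fin d) ℝ) :
    (avgM S T).trace = (Fintype.card Γ : ℝ)⁻¹ * ∑ φ : Γ, (S φ).trace * (T φ⁻¹).trace := by
  rw [avgM, Matrix.trace_smul, Matrix.trace_sum, smul_eq_mul]
  congr 1
  exact Finset.sum_congr rfl fun φ _ => bigP_trace _ _

lemma avgM_fixed_one {T : Γ → Matrix (Fin d) (Fin d) ℝ} (hT : IsRep Γ T) :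
    (avgM T T).mulVec (fun kl : Fin d × Fin d => (1 : Matrix (Fin d) (Fin d) ℝ) kl.1 kl.2)
      = fun kl : Fin d × Fin d => (1 : Matrix (Fin d) (Fin d) ℝ) kl.1 kl.2 := by
  have hcard : ((Fintype.card Γ : ℝ)) ≠ 0 := by
    exact_mod_cast Fintype.card_ne_zero
  rw [avgM, Matrix.smul_mulVec, sum_mulVec']
  rw [Finset.sum_congr rfl fun φ _ => bigP_mulVec (T φ) (T φ⁻¹) 1]
  have : ∀ φ : Γ, (fun pq : Fin d × Fin d => (T φ * (1 : Matrix (Fin d) (Fin d) ℝ) * T φ⁻¹) pq.1 pq.2)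
      = fun pq : Fin d × Fin d => (1 : Matrix (Fin d) (Fin d) ℝ) pq.1 pq.2 := by
    intro φ
    rw [Matrix.mul_one, isRep_mul_inv hT]
  rw [Finset.sum_congr rfl fun φ _ => this φ, Finset.sum_const, Finset.card_univ,
    ← Nat.cast_smul_eq_nsmul ℝ, smul_smul, inv_mul_cancel₀ hcard, one_smul]
end Aux6
set_option maxHeartbeats 1600000 in
theorem stmt12 {n d : ℕ} (Γ : Subgroup (Equiv.Perm (Fin n)))
    (v : Fin n → Fin d → ℝ) (hv : v ∈ SdSet n d Γ)
    (T : Γ → Matrix (Fin d) (Fin d) ℝ)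
    (hT : IsRepOf Γ T v) (hTirr : IrredRep Γ T) :
    Flexible Γ v ↔
      ∃ w ∈ SdSet n d Γ, ¬ AreEquivalent v w ∧
        ∃ T' : Γ → Matrix (Fin d) (Fin d) ℝ, IsRepOf Γ T' w ∧ IsoReps Γ T T' := by
  rcases Nat.eq_zero_or_pos d with hd0 | hd
  · subst hd0
    have hall : ∀ x : Fin n → Fin 0 → ℝ, AreEquivalent v x := fun x =>
      ⟨1, by simp, fun i => funext fun j => j.elim0⟩
    constructor
    · rintro ⟨x, -, hne⟩
      exact absurd (hall x) hne
    · rintro ⟨x, -, hne, -⟩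
      exact absurd (hall x) hne
  · constructor
    · -- forward direction
      rintro ⟨w, ⟨c, hcont, hmem, hc0, hc1⟩, hneq⟩
      classical
      letI : Fintype ↥Γ := Fintype.ofFinite _
      have hwmem : w ∈ SdSet n d Γ := hc1 ▸ hmem 1 ⟨zero_le_one, le_refl 1⟩
      have hT'rep : IsRepOf Γ (repF Γ w) w := isRepOf_repF hwmem
      refine ⟨w, hwmem, hneq, repF Γ w, hT'rep, ?_⟩
      have hTv : T = repF Γ v := funext (rep_eq_repF hv.1 hT)
      set f : ℝ → ℝ := fun t => Matrix.trace (avgM (repF Γ (c t)) T) with hf_def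
      have hcard : ((Fintype.card ↥Γ : ℝ)) ≠ 0 := by exact_mod_cast Fintype.card_ne_zero
      have hh : Continuous (fun x : Fin n → Fin d → ℝ => Matrix.trace (avgM (repF Γ x) T)) := by
        have heq : (fun x : Fin n → Fin d → ℝ => Matrix.trace (avgM (repF Γ x) T))
            = fun x => (Fintype.card ↥Γ : ℝ)⁻¹ *
                ∑ φ : ↥Γ, (∑ k, ∑ i, x (φ.val i) k * x i k) * (T φ⁻¹).trace := by
          funext x
          rw [trace_avgM]
          congr 1
        rw [heq]
        apply continuous_const.mul
        apply continuous_finset_sum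
        intro φ _
        apply Continuous.mul ?_ continuous_const
        apply continuous_finset_sum
        intro k _
        apply continuous_finset_sum
        intro i _
        exact ((continuous_apply k).comp (continuous_apply (φ.val i))).mul
          (continuous_apply_apply i k)
      have hcont_f : ContinuousOn f (Set.Icc 0 1) := hh.comp_continuousOn hcont
      have hnat : ∀ t ∈ Set.Icc (0:ℝ) 1, ∃ r : ℕ, f t = r := by
        intro t ht
        have hrep_t : IsRepOf Γ (repF Γ (c t)) (c t) := isRepOf_repF (hmem t ht)
        exact ⟨_, idem_trace_eq_finrank (avgM_idem hrep_t.1 hT.1)⟩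
      have hconst : f 1 = f 0 := nat_valued_const hcont_f hnat
      have hK1ne : avgM (repF Γ w) T ≠ 0 := by
        intro h0
        have hf1 : f 1 = 0 := by
          rw [hf_def]
          simp only
          rw [hc1, h0, Matrix.trace_zero]
        have hf0 : f 0 = 0 := by rw [← hconst, hf1]
        have hrk := idem_trace_eq_finrank (avgM_idem hT.1 hT.1)
        have hf0' : f 0 = (avgM T T).trace := by
          rw [hf_def]
          simp only
          rw [hc0, ← hTv]
        rw [hf0', hrk] at hf0
        have hzero : LinearMap.range (avgM T T).mulVecLin = ⊥ :=
          Submodule.finrank_eq_zero.mp (by exact_mod_cast hf0)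
        have hfix := avgM_fixed_one hT.1
        have hmem1 : (avgM T T).mulVec
            (fun kl : Fin d × Fin d => (1 : Matrix (Fin d) (Fin d) ℝ) kl.1 kl.2)
            ∈ LinearMap.range (avgM T T).mulVecLin :=
          ⟨_, rfl⟩
        rw [hzero, Submodule.mem_bot] at hmem1
        rw [hfix] at hmem1
        have hone := congrFun hmem1 (⟨0, hd⟩, ⟨0, hd⟩)
        simp [Matrix.one_apply] at hone
      obtain ⟨pq, kl, hent⟩ : ∃ pq kl, avgM (repF Γ w) T pq kl ≠ 0 := by
        by_contra hno
        push_neg at hno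
        apply hK1ne
        ext pq kl
        rw [hno pq kl]
        rfl
      set R0 := avgR (repF Γ w) T (Matrix.single kl.1 kl.2 (1:ℝ)) with hR0_def
      have h1 : R0 pq.1 pq.2 = avgM (repF Γ w) T (pq.1, pq.2) (kl.1, kl.2) :=
        avgR_entry (repF Γ w) T kl.1 kl.2 pq.1 pq.2
      have hR0ne : R0 ≠ 0 := by
        intro h0
        rw [h0] at h1
        exact hent (by rw [← h1]; rfl)
      have hintw : ∀ ψ : Γ, repF Γ w ψ * R0 = R0 * T ψ :=
        fun ψ => avgR_intertwines hT'rep.1 hT.1 _ ψ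
      have hdet : R0.det ≠ 0 := by
        intro hdet0
        obtain ⟨y, hyne, hy0⟩ := (Matrix.exists_mulVec_eq_zero_iff).mpr hdet0
        set W := LinearMap.ker R0.mulVecLin with hW
        have hWinv : ∀ (φ : Γ), ∀ x ∈ W, (T φ).mulVec x ∈ W := by
          intro φ x hx
          simp only [hW, LinearMap.mem_ker, Matrix.mulVecLin_apply] at hx ⊢
          rw [Matrix.mulVec_mulVec, ← hintw φ, ← Matrix.mulVec_mulVec, hx, Matrix.mulVec_zero]
        rcases hTirr W hWinv with hbot | htop
        · have hyW : y ∈ W := by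
            simp only [hW, LinearMap.mem_ker, Matrix.mulVecLin_apply]
            exact hy0
          rw [hbot, Submodule.mem_bot] at hyW
          exact hyne hyW
        · apply hR0ne
          apply matrix_eq_zero_of_mulVec_eq_zero
          intro z
          have hz : z ∈ W := htop ▸ Submodule.mem_top
          simpa only [hW, LinearMap.mem_ker, Matrix.mulVecLin_apply] using hz
      exact ⟨R0, hdet, fun φ => (hintw φ).symm⟩
    · -- backward direction
      rintro ⟨w, hw, hne, T', hT', hiso⟩
      exact flexible_of_iso hd hv hT hTirr hw hne hT' hiso
end

section
/- Let Γ ⊆ Sym({1,…,n}) be a permutation group and let v ∈ S_d(Γ) be irreducible with arrangement space U ⊆ ℝ^n (which is d-dimensional). Then v is flexible if and only if there exists a d-dimensional Γ-invariant subspace Ū ⊆ ℝ^n with Ū ≠ U such that Ū is not orthogonal to U. -/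
open Matrix

section MatHelpers
variable {n d : ℕ}

lemma mulVec_single_col {m k : ℕ} (A : Matrix (Fin m) (Fin k) ℝ) (j : Fin k) (i : Fin m) :
    (A *ᵥ Pi.single j 1) i = A i j := by
  simp [Matrix.mulVec, dotProduct, Pi.single_apply]

lemma matrix_ext_mulVec {m k : ℕ} {A B : Matrix (Fin m) (Fin k) ℝ}
    (h : ∀ x, A *ᵥ x = B *ᵥ x) : A = B := by
  ext i j
  have := congrFun (h (Pi.single j 1)) i
  simpa [mulVec_single_col] using this

lemma dot_mulVec_left {m : ℕ} (A : Matrix (Fin m) (Fin m) ℝ) (x y : Fin m → ℝ) :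
    (A *ᵥ x) ⬝ᵥ y = x ⬝ᵥ (Aᵀ *ᵥ y) := by
  simp only [dotProduct, Matrix.mulVec, Matrix.transpose_apply, dotProduct,
    Finset.sum_mul, Finset.mul_sum]
  rw [Finset.sum_comm]
  apply Finset.sum_congr rfl; intro i _; apply Finset.sum_congr rfl; intro j _; ring

end MatHelpers

section Infra

variable {n d : ℕ}

lemma mem_arrSpace_iff {v : Fin n → Fin d → ℝ} {u : Fin n → ℝ} :
    u ∈ arrSpace v ↔ ∃ c, (arrMat v) *ᵥ c = u := by
  rw [arrSpace, show Set.range (arrMat v)ᵀ = Set.range (arrMat v).col from rfl,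
    ← Matrix.range_mulVecLin]
  constructor
  · rintro ⟨c, rfl⟩; exact ⟨c, (Matrix.mulVecLin_apply _ _).symm⟩
  · rintro ⟨c, rfl⟩; exact ⟨c, Matrix.mulVecLin_apply _ _⟩

lemma mulVec_mem_arrSpace (v : Fin n → Fin d → ℝ) (c : Fin d → ℝ) :
    (arrMat v) *ᵥ c ∈ arrSpace v := mem_arrSpace_iff.mpr ⟨c, rfl⟩

lemma col_mem_arrSpace (v : Fin n → Fin d → ℝ) (j : Fin d) :
    (arrMat v)ᵀ j ∈ arrSpace v := Submodule.subset_span ⟨j, rfl⟩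

lemma finrank_arrSpace {v : Fin n → Fin d → ℝ} (hN : IsNormalized v) :
    Module.finrank ℝ (arrSpace v) = d := by
  have hli : LinearIndependent ℝ (fun j => (arrMat v)ᵀ j) := by
    rw [Fintype.linearIndependent_iff]
    intro g hg j
    have hsum : (arrMat v) *ᵥ g = ∑ j, g j • (arrMat v)ᵀ j := by
      funext i
      simp [Matrix.mulVec, dotProduct, Finset.sum_apply, mul_comm]
    have h2 : (arrMat v)ᵀ *ᵥ ((arrMat v) *ᵥ g) = 0 := by
      rw [hsum, hg, Matrix.mulVec_zero]
    rw [Matrix.mulVec_mulVec, hN, Matrix.one_mulVec] at h2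
    exact congrFun h2 j
  have := finrank_span_eq_card (R := ℝ) hli
  rw [arrSpace]; rw [Fintype.card_fin] at this; exact this

lemma normalized_proj_id {v : Fin n → Fin d → ℝ} (hN : IsNormalized v) {u : Fin n → ℝ}
    (hu : u ∈ arrSpace v) : (arrMat v) *ᵥ ((arrMat v)ᵀ *ᵥ u) = u := by
  obtain ⟨c, rfl⟩ := mem_arrSpace_iff.mp hu
  rw [Matrix.mulVec_mulVec, Matrix.mulVec_mulVec, Matrix.mul_assoc, hN, Matrix.mul_one]

/-- If the arrangement spaces are nested, normalized arrangements are related by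
an orthogonal matrix. -/
lemma exists_orth_rel {v w : Fin n → Fin d → ℝ} (hNv : IsNormalized v) (hNw : IsNormalized w)
    (hle : arrSpace w ≤ arrSpace v) :
    ∃ X : Matrix (Fin d) (Fin d) ℝ, Xᵀ * X = 1 ∧ arrMat w = arrMat v * X := by
  refine ⟨(arrMat v)ᵀ * arrMat w, ?_, ?_⟩
  · have h : ((arrMat v)ᵀ * arrMat w)ᵀ * ((arrMat v)ᵀ * arrMat w)
        = (arrMat w)ᵀ * (arrMat v * ((arrMat v)ᵀ * arrMat w)) := by
      rw [Matrix.transpose_mul, Matrix.transpose_transpose, Matrix.mul_assoc]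
    rw [h]
    have hcol : arrMat v * ((arrMat v)ᵀ * arrMat w) = arrMat w := by
      apply matrix_ext_mulVec
      intro x
      rw [← Matrix.mulVec_mulVec, ← Matrix.mulVec_mulVec]
      exact normalized_proj_id hNv (hle (mulVec_mem_arrSpace w x))
    rw [hcol, hNw]
  · symm
    apply matrix_ext_mulVec
    intro x
    rw [← Matrix.mulVec_mulVec, ← Matrix.mulVec_mulVec]
    exact normalized_proj_id hNv (hle (mulVec_mem_arrSpace w x))

/-- Equal arrangement spaces (normalized) give equivalence. -/
lemma equivalent_of_le {v w : Fin n → Fin d → ℝ} (hNv : IsNormalized v) (hNw : IsNormalized w)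
    (hle : arrSpace w ≤ arrSpace v) : AreEquivalent v w := by
  obtain ⟨X, hX1, hX2⟩ := exists_orth_rel hNv hNw hle
  have hdet : X.det * X.det = 1 := by
    have := congrArg Matrix.det hX1
    rwa [Matrix.det_mul, Matrix.det_transpose, Matrix.det_one] at this
  refine ⟨Xᵀ, ?_, ?_⟩
  · rw [Matrix.det_transpose]
    intro h0; rw [h0, mul_zero] at hdet; exact one_ne_zero hdet.symm
  · intro i
    funext j
    have h := congrFun (congrFun hX2 i) j
    rw [Matrix.mul_apply] at h
    show (Xᵀ *ᵥ v i) j = w i j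
    rw [show w i j = arrMat w i j from rfl, h]
    simp [Matrix.mulVec, dotProduct, Matrix.transpose_apply, arrMat, mul_comm]

end Infra

section Perm

variable {n d : ℕ}

def Qmat {n : ℕ} (φ : Equiv.Perm (Fin n)) : Matrix (Fin n) (Fin n) ℝ :=
  Matrix.of fun i k => if k = φ i then 1 else 0

lemma Qmat_mul {k : ℕ} (φ : Equiv.Perm (Fin n)) (M : Matrix (Fin n) (Fin k) ℝ) :
    Qmat φ * M = Matrix.of fun i j => M (φ i) j := by
  ext i j
  simp [Qmat, Matrix.mul_apply]

lemma Qmat_mulVec (φ : Equiv.Perm (Fin n)) (x : Fin n → ℝ) :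
    Qmat φ *ᵥ x = fun i => x (φ i) := by
  funext i
  simp [Qmat, Matrix.mulVec, dotProduct]

lemma Qmat_transpose (φ : Equiv.Perm (Fin n)) : (Qmat φ)ᵀ = Qmat φ⁻¹ := by
  ext i j
  simp only [Qmat, Matrix.transpose_apply, Matrix.of_apply]
  refine if_congr ?_ rfl rfl
  rw [Equiv.Perm.inv_def, Equiv.eq_symm_apply, eq_comm]

lemma Qmat_mul_Qmat (φ ψ : Equiv.Perm (Fin n)) : Qmat φ * Qmat ψ = Qmat (ψ * φ) := by
  rw [Qmat_mul]; ext i j; simp [Qmat, Equiv.Perm.mul_apply]; rfl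

lemma Qmat_one : (Qmat (1 : Equiv.Perm (Fin n))) = 1 := by
  ext i j; simp [Qmat, Matrix.one_apply, eq_comm]

lemma Qmat_orth (φ : Equiv.Perm (Fin n)) : (Qmat φ)ᵀ * Qmat φ = 1 := by
  rw [Qmat_transpose, Qmat_mul_Qmat]
  simp [Qmat_one]

/-- Matrix form of equivariance. -/
lemma rep_matrix {Γ : Subgroup (Equiv.Perm (Fin n))} {T : Γ → Matrix (Fin d) (Fin d) ℝ}
    {v : Fin n → Fin d → ℝ} (hT : ∀ (φ : Γ) (i : Fin n), (T φ).mulVec (v i) = v (φ.val i))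
    (φ : Γ) : Qmat φ.val * arrMat v = arrMat v * (T φ)ᵀ := by
  rw [Qmat_mul]
  ext i j
  have := congrFun (hT φ i) j
  rw [Matrix.of_apply]
  show v (φ.val i) j = _
  rw [← this]
  simp [Matrix.mulVec, dotProduct, Matrix.mul_apply, arrMat, mul_comm]

/-- Arrangement spaces of Γ-arrangements are Γ-invariant. -/
lemma invariant_arrSpace {Γ : Subgroup (Equiv.Perm (Fin n))} {w : Fin n → Fin d → ℝ}
    (hGA : IsGammaArr Γ w) : GammaInvariant Γ (arrSpace w) := by
  obtain ⟨T, hT⟩ := hGA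
  intro φ x hx
  have hmap : (fun i => x (φ.val⁻¹ i)) = Qmat φ.val⁻¹ *ᵥ x := by
    rw [Qmat_mulVec]
  rw [hmap]
  obtain ⟨c, rfl⟩ := mem_arrSpace_iff.mp hx
  rw [Matrix.mulVec_mulVec]
  have hrep := rep_matrix hT.2 φ⁻¹
  have : (φ⁻¹ : Γ).val = φ.val⁻¹ := rfl
  rw [this] at hrep
  rw [hrep, ← Matrix.mulVec_mulVec]
  exact mulVec_mem_arrSpace w _

/-- Orthogonality of arrangement spaces in matrix terms. -/
lemma orth_matrix_zero {v w : Fin n → Fin d → ℝ}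
    (horth : OrthSpaces (arrSpace v) (arrSpace w)) :
    (arrMat w)ᵀ * arrMat v = 0 := by
  ext j k
  have := horth _ (col_mem_arrSpace v k) _ (col_mem_arrSpace w j)
  rw [Matrix.mul_apply]
  rw [show (0 : Matrix (Fin d) (Fin d) ℝ) j k = 0 from rfl, ← this]
  simp [dotProduct, Matrix.transpose_apply, mul_comm]

/-- If all columns of `arrMat v` are orthogonal to `W`, the spaces are orthogonal. -/
lemma orthSpaces_of_cols {v : Fin n → Fin d → ℝ} {W : Submodule ℝ (Fin n → ℝ)}
    (h : ∀ j, ∀ w ∈ W, ((arrMat v)ᵀ j) ⬝ᵥ w = 0) :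
    OrthSpaces (arrSpace v) W := by
  intro u hu w hw
  induction hu using Submodule.span_induction with
  | mem x hx => obtain ⟨j, rfl⟩ := hx; exact h j w hw
  | zero => simp
  | add x y _ _ hx hy => rw [add_dotProduct, hx, hy, add_zero]
  | smul a x _ hx => rw [smul_dotProduct, hx, smul_zero]

end Perm

section Dir1

lemma direction1 {n d : ℕ} (hd : 0 < d) (Γ : Subgroup (Equiv.Perm (Fin n)))
    (v : Fin n → Fin d → ℝ) (hv : v ∈ SdSet n d Γ)
    (hno : ∀ W : Submodule ℝ (Fin n → ℝ), GammaInvariant Γ W → Module.finrank ℝ W = d →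
      W = arrSpace v ∨ OrthSpaces (arrSpace v) W) :
    ¬ Flexible Γ v := by
  rintro ⟨w, ⟨c, hc, hmem, hc0, hc1⟩, hne⟩
  set g : ℝ → ℝ := fun t => ((arrMat (c t))ᵀ * arrMat v).det with hgdef
  have hgc : ContinuousOn g (Set.Icc 0 1) := by
    have hcont : Continuous (fun u : Fin n → Fin d → ℝ =>
        ((arrMat u)ᵀ * arrMat v).det) := by
      apply Continuous.matrix_det
      exact Continuous.matrix_mul (Continuous.matrix_transpose continuous_id) continuous_const
    exact hcont.comp_continuousOn hc
  -- key dichotomy at each time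
  have hval : ∀ t ∈ Set.Icc (0:ℝ) 1,
      (arrSpace (c t) = arrSpace v ∧ (g t = 1 ∨ g t = -1)) ∨ g t = 0 := by
    intro t ht
    obtain ⟨hN, hGA⟩ := hmem t ht
    rcases hno _ (invariant_arrSpace hGA) (finrank_arrSpace hN) with heq | horth
    · left
      refine ⟨heq, ?_⟩
      obtain ⟨X, hX1, hX2⟩ := exists_orth_rel hv.1 hN (le_of_eq heq)
      have hXdet : X.det * X.det = 1 := by
        have := congrArg Matrix.det hX1
        rwa [Matrix.det_mul, Matrix.det_transpose, Matrix.det_one] at this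
      have hg : g t = X.det := by
        rw [hgdef]
        show ((arrMat (c t))ᵀ * arrMat v).det = X.det
        rw [hX2, Matrix.transpose_mul, Matrix.mul_assoc]
        rw [show (arrMat v)ᵀ * arrMat v = 1 from hv.1, Matrix.mul_one, Matrix.det_transpose]
      rw [hg]
      exact mul_self_eq_one_iff.mp hXdet
    · right
      show ((arrMat (c t))ᵀ * arrMat v).det = 0
      rw [orth_matrix_zero horth]
      haveI : Nonempty (Fin d) := ⟨⟨0, hd⟩⟩
      exact Matrix.det_zero
  have hg0 : g 0 = 1 := by
    show ((arrMat (c 0))ᵀ * arrMat v).det = 1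
    rw [hc0]
    rw [show (arrMat v)ᵀ * arrMat v = 1 from hv.1, Matrix.det_one]
  -- g is positive on [0,1] by IVT
  have hpos : ∀ t ∈ Set.Icc (0:ℝ) 1, 0 < g t := by
    by_contra hcon
    push_neg at hcon
    obtain ⟨t0, ht0, hle⟩ := hcon
    have hsub : Set.Icc (0:ℝ) t0 ⊆ Set.Icc 0 1 := Set.Icc_subset_Icc le_rfl ht0.2
    have hiv := intermediate_value_Icc' ht0.1 (hgc.mono hsub)
    have hhalf : (1/2 : ℝ) ∈ Set.Icc (g t0) (g 0) := ⟨by linarith, by rw [hg0]; norm_num⟩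
    obtain ⟨s, hs, hgs⟩ := hiv hhalf
    rcases hval s (hsub hs) with ⟨-, h1 | h1⟩ | h1 <;> rw [hgs] at h1 <;> norm_num at h1
  -- conclude at t = 1
  have h1 := hval 1 ⟨by norm_num, le_rfl⟩
  have hg1 : 0 < g 1 := hpos 1 ⟨by norm_num, le_rfl⟩
  rcases h1 with ⟨heq, -⟩ | h0
  · exact hne (by
      rw [← hc1]
      exact equivalent_of_le hv.1 (hmem 1 ⟨by norm_num, le_rfl⟩).1 (le_of_eq heq))
  · rw [h0] at hg1; exact lt_irrefl 0 hg1

end Dir1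

section Proj

lemma dot_mulVec_rect {m k : ℕ} (A : Matrix (Fin m) (Fin k) ℝ) (x : Fin k → ℝ) (y : Fin m → ℝ) :
    (A *ᵥ x) ⬝ᵥ y = x ⬝ᵥ (Aᵀ *ᵥ y) := by
  simp only [dotProduct, Matrix.mulVec, Matrix.transpose_apply, dotProduct,
    Finset.sum_mul, Finset.mul_sum]
  rw [Finset.sum_comm]
  apply Finset.sum_congr rfl; intro i _; apply Finset.sum_congr rfl; intro j _; ring

lemma euclid_inner_dot {n : ℕ} (a b : Fin n → ℝ) :
    (inner ℝ ((WithLp.linearEquiv 2 ℝ (Fin n → ℝ)).symm a)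
      ((WithLp.linearEquiv 2 ℝ (Fin n → ℝ)).symm b) : ℝ) = a ⬝ᵥ b := by
  simp [PiLp.inner_apply, RCLike.inner_apply, dotProduct, mul_comm,
    WithLp.linearEquiv, dotProduct]

lemma exists_proj_matrix0 {n : ℕ} (W : Submodule ℝ (Fin n → ℝ)) :
    ∃ P : Matrix (Fin n) (Fin n) ℝ,
      (∀ x, P *ᵥ x ∈ W) ∧ (∀ x ∈ W, P *ᵥ x = x) ∧
      (∀ x, ∀ w ∈ W, (x - P *ᵥ x) ⬝ᵥ w = 0) := by
  classical
  let e : (Fin n → ℝ) ≃ₗ[ℝ] EuclideanSpace ℝ (Fin n) := (WithLp.linearEquiv 2 ℝ _).symm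
  let K : Submodule ℝ (EuclideanSpace ℝ (Fin n)) := W.map e.toLinearMap
  haveI : FiniteDimensional ℝ K := FiniteDimensional.finiteDimensional_submodule K
  let L : (Fin n → ℝ) →ₗ[ℝ] (Fin n → ℝ) :=
    e.symm.toLinearMap ∘ₗ K.subtype ∘ₗ (K.orthogonalProjectionOnto).toLinearMap ∘ₗ e.toLinearMap
  have hL : ∀ x, L x = e.symm ((K.orthogonalProjectionOnto (e x) : EuclideanSpace ℝ (Fin n))) :=
    fun x => rfl
  have hmv : ∀ x, (LinearMap.toMatrix' L) *ᵥ x = L x := by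
    intro x; rw [← Matrix.toLin'_apply, Matrix.toLin'_toMatrix']
  refine ⟨LinearMap.toMatrix' L, ?_, ?_, ?_⟩
  · intro x
    rw [hmv, hL]
    obtain ⟨w, hw, hweq⟩ := (K.orthogonalProjectionOnto (e x)).2
    rw [← hweq]; simpa using hw
  · intro x hxW
    rw [hmv, hL]
    have : ((K.orthogonalProjectionOnto) (e x) : EuclideanSpace ℝ (Fin n)) = e x :=
      Submodule.starProjection_eq_self_iff.mpr (Submodule.mem_map_of_mem hxW)
    rw [this]
    simp
  · intro x w hwW
    rw [hmv, hL]
    have horth := Submodule.sub_starProjection_mem_orthogonal (K := K) (e x)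
    have hinner := (Submodule.mem_orthogonal' _ _).mp horth (e w) ⟨w, hwW, rfl⟩
    have key : e x - K.starProjection (e x) =
        e (x - e.symm (K.orthogonalProjectionOnto (e x) : EuclideanSpace ℝ (Fin n))) := by
      simp [map_sub]
    rw [key] at hinner
    have := euclid_inner_dot (n := n)
      (x - e.symm (K.orthogonalProjectionOnto (e x) : EuclideanSpace ℝ (Fin n))) w
    rw [← this]
    have hew : ((WithLp.linearEquiv 2 ℝ (Fin n → ℝ)).symm w) = e w := rfl
    rw [hew, ← hinner]

/-- Orthogonal projection matrix with symmetry and idempotence. -/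
lemma exists_proj_matrix {n : ℕ} (W : Submodule ℝ (Fin n → ℝ)) :
    ∃ P : Matrix (Fin n) (Fin n) ℝ,
      (∀ x, P *ᵥ x ∈ W) ∧ (∀ x ∈ W, P *ᵥ x = x) ∧
      (∀ x, ∀ w ∈ W, (x - P *ᵥ x) ⬝ᵥ w = 0) ∧ Pᵀ = P ∧ P * P = P := by
  obtain ⟨P, h1, h2, h3⟩ := exists_proj_matrix0 W
  have hsym : ∀ x y, (P *ᵥ x) ⬝ᵥ y = x ⬝ᵥ (P *ᵥ y) := by
    intro x y
    have e1 : (y - P *ᵥ y) ⬝ᵥ (P *ᵥ x) = 0 := h3 y _ (h1 x)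
    have e2 : (x - P *ᵥ x) ⬝ᵥ (P *ᵥ y) = 0 := h3 x _ (h1 y)
    rw [sub_dotProduct, sub_eq_zero] at e1 e2
    rw [dotProduct_comm, e1, dotProduct_comm, ← e2]
  refine ⟨P, h1, h2, h3, ?_, ?_⟩
  · apply Matrix.ext
    intro i j
    have h := hsym (Pi.single i 1) (Pi.single j 1)
    have l1 : (P *ᵥ Pi.single i 1) ⬝ᵥ Pi.single j 1 = P j i := by
      simp [dotProduct, Pi.single_apply, mulVec_single_col]
    have l2 : Pi.single i 1 ⬝ᵥ (P *ᵥ Pi.single j 1) = P i j := by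
      simp [dotProduct, Pi.single_apply, mulVec_single_col]
    rw [Matrix.transpose_apply, ← l1, h, l2]
  · apply matrix_ext_mulVec
    intro x
    rw [← Matrix.mulVec_mulVec]
    exact h2 _ (h1 x)

/-- The projection onto a Γ-invariant subspace commutes with the permutation matrices. -/
lemma proj_comm {n : ℕ} {Γ : Subgroup (Equiv.Perm (Fin n))} {W : Submodule ℝ (Fin n → ℝ)}
    (hWinv : GammaInvariant Γ W) {P : Matrix (Fin n) (Fin n) ℝ}
    (h1 : ∀ x, P *ᵥ x ∈ W) (h2 : ∀ x ∈ W, P *ᵥ x = x)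
    (h3 : ∀ x, ∀ w ∈ W, (x - P *ᵥ x) ⬝ᵥ w = 0) (φ : Γ) :
    Qmat φ.val * P = P * Qmat φ.val := by
  have hQW : ∀ (ψ : Γ), ∀ w ∈ W, Qmat ψ.val *ᵥ w ∈ W := by
    intro ψ w hw
    rw [Qmat_mulVec]
    have := hWinv ψ⁻¹ w hw
    have hval : (ψ⁻¹ : Γ).val⁻¹ = ψ.val := by simp
    rwa [hval] at this
  apply matrix_ext_mulVec
  intro x
  rw [← Matrix.mulVec_mulVec, ← Matrix.mulVec_mulVec]
  set Q := Qmat φ.val with hQ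
  set a := Q *ᵥ (P *ᵥ x) with ha
  set b := P *ᵥ (Q *ᵥ x) with hb
  have haW : a ∈ W := hQW φ _ (h1 x)
  have hbW : b ∈ W := h1 _
  have hdiff : ∀ w ∈ W, (a - b) ⬝ᵥ w = 0 := by
    intro w hw
    have key : a - b = ((Q *ᵥ x) - P *ᵥ (Q *ᵥ x)) - (Q *ᵥ (x - P *ᵥ x)) := by
      rw [Matrix.mulVec_sub]
      abel
    rw [key, sub_dotProduct]
    have t2 : ((Q *ᵥ x) - P *ᵥ (Q *ᵥ x)) ⬝ᵥ w = 0 := h3 _ w hw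
    have t1 : (Q *ᵥ (x - P *ᵥ x)) ⬝ᵥ w = 0 := by
      rw [dot_mulVec_rect, hQ, Qmat_transpose]
      refine h3 x _ ?_
      have := hQW φ⁻¹ w hw
      have hval : (φ⁻¹ : Γ).val = φ.val⁻¹ := rfl
      rwa [hval] at this
    rw [t1, t2, sub_zero]
  have hzero : a - b = 0 := by
    rw [← dotProduct_self_eq_zero]
    exact hdiff (a - b) (Submodule.sub_mem W haW hbW)
  have := sub_eq_zero.mp hzero
  exact this

end Proj

section Spectral

lemma exists_eigenvector {d : ℕ} (hd : 0 < d) (A : Matrix (Fin d) (Fin d) ℝ)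
    (hA : Aᵀ = A) : ∃ (lam : ℝ) (x : Fin d → ℝ), x ≠ 0 ∧ A *ᵥ x = lam • x := by
  have hherm : A.IsHermitian := by
    rw [Matrix.IsHermitian]
    ext i j
    rw [Matrix.conjTranspose_apply]
    simp only [star_trivial]
    conv_rhs => rw [← hA]
    rw [Matrix.transpose_apply]
  let j : Fin d := ⟨0, hd⟩
  refine ⟨hherm.eigenvalues j, _, ?_, hherm.mulVec_eigenvectorBasis j⟩
  intro h0
  have := hherm.eigenvectorBasis.orthonormal.1 j
  have h1 : hherm.eigenvectorBasis j = 0 := by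
    ext i
    exact congrFun h0 i
  rw [h1] at this
  simp at this

/-- Schur-type lemma: a symmetric matrix commuting with an irreducible representation
is a scalar multiple of the identity. -/
lemma scalar_of_commute {n d : ℕ} {Γ : Subgroup (Equiv.Perm (Fin n))}
    {T : Γ → Matrix (Fin d) (Fin d) ℝ} (hirr : IrredRep Γ T) (hd : 0 < d)
    (A : Matrix (Fin d) (Fin d) ℝ) (hA : Aᵀ = A)
    (hcomm : ∀ φ, A * T φ = T φ * A) :
    ∃ lam : ℝ, A = lam • (1 : Matrix (Fin d) (Fin d) ℝ) := by
  obtain ⟨lam, x, hx0, hx⟩ := exists_eigenvector hd A hA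
  refine ⟨lam, ?_⟩
  let E : Submodule ℝ (Fin d → ℝ) := LinearMap.ker (A.mulVecLin - lam • LinearMap.id)
  have hmemE : ∀ y, y ∈ E ↔ A *ᵥ y = lam • y := by
    intro y
    rw [LinearMap.mem_ker, LinearMap.sub_apply, LinearMap.smul_apply, LinearMap.id_apply,
      Matrix.mulVecLin_apply, sub_eq_zero]
  have hEinv : ∀ (φ : Γ), ∀ y ∈ E, (T φ) *ᵥ y ∈ E := by
    intro φ y hy
    rw [hmemE] at hy ⊢
    rw [Matrix.mulVec_mulVec, hcomm, ← Matrix.mulVec_mulVec, hy, Matrix.mulVec_smul]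
  rcases hirr E hEinv with hbot | htop
  · exfalso
    have : x ∈ E := (hmemE x).mpr hx
    rw [hbot] at this
    exact hx0 (Submodule.mem_bot ℝ |>.mp this)
  · apply matrix_ext_mulVec
    intro y
    have : y ∈ E := htop ▸ Submodule.mem_top
    rw [(hmemE y).mp this]
    funext i
    simp [Matrix.mulVec, dotProduct, Matrix.one_apply, Pi.smul_apply, smul_eq_mul,
      Matrix.smul_apply, Finset.sum_ite_eq, mul_ite]

end Spectral

section RepFacts

variable {n d : ℕ}

/-- Converse of `rep_matrix`: matrix identity gives pointwise equivariance. -/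
lemma rep_pointwise {Γ : Subgroup (Equiv.Perm (Fin n))} {T : Γ → Matrix (Fin d) (Fin d) ℝ}
    {u : Fin n → Fin d → ℝ} (φ : Γ)
    (h : Qmat φ.val * arrMat u = arrMat u * (T φ)ᵀ) :
    ∀ i, (T φ) *ᵥ u i = u (φ.val i) := by
  intro i
  funext j
  have h2 := congrFun (congrFun h i) j
  rw [Qmat_mul] at h2
  rw [Matrix.of_apply, Matrix.mul_apply] at h2
  show (T φ *ᵥ u i) j = u (φ.val i) j
  rw [show u (φ.val i) j = arrMat u (φ.val i) j from rfl, h2]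
  simp [Matrix.mulVec, dotProduct, Matrix.transpose_apply, arrMat, mul_comm]

lemma rep_T_one {Γ : Subgroup (Equiv.Perm (Fin n))} {T : Γ → Matrix (Fin d) (Fin d) ℝ}
    (hT : IsRep Γ T) : T 1 = 1 := by
  have hT11 : T 1 * T 1 = T 1 := by rw [← hT.2 1 1, mul_one]
  have horth := hT.1 1
  calc T 1 = 1 * T 1 := (one_mul _).symm
    _ = ((T 1)ᵀ * T 1) * T 1 := by rw [horth]
    _ = (T 1)ᵀ * (T 1 * T 1) := by rw [Matrix.mul_assoc]
    _ = (T 1)ᵀ * T 1 := by rw [hT11]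
    _ = 1 := horth

lemma rep_T_inv {Γ : Subgroup (Equiv.Perm (Fin n))} {T : Γ → Matrix (Fin d) (Fin d) ℝ}
    (hT : IsRep Γ T) (φ : Γ) : T φ⁻¹ = (T φ)ᵀ := by
  have h2 : T φ * T φ⁻¹ = 1 := by rw [← hT.2 φ φ⁻¹, mul_inv_cancel, rep_T_one hT]
  calc T φ⁻¹ = 1 * T φ⁻¹ := (one_mul _).symm
    _ = ((T φ)ᵀ * T φ) * T φ⁻¹ := by rw [hT.1]
    _ = (T φ)ᵀ * (T φ * T φ⁻¹) := by rw [Matrix.mul_assoc]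
    _ = (T φ)ᵀ := by rw [h2, Matrix.mul_one]

end RepFacts

section Dir2

lemma direction2 {n d : ℕ} (hd : 0 < d) (Γ : Subgroup (Equiv.Perm (Fin n)))
    (v : Fin n → Fin d → ℝ) (hv : v ∈ SdSet n d Γ)
    (T : Γ → Matrix (Fin d) (Fin d) ℝ) (hT : IsRepOf Γ T v) (hTirr : IrredRep Γ T)
    (W : Submodule ℝ (Fin n → ℝ)) (hWinv : GammaInvariant Γ W)
    (hWrank : Module.finrank ℝ W = d) (hWne : W ≠ arrSpace v)
    (hWorth : ¬ OrthSpaces (arrSpace v) W) :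
    Flexible Γ v := by
  classical
  set M := arrMat v with hM
  have hN : Mᵀ * M = 1 := hv.1
  obtain ⟨P, h1, h2, h3, hPsym, hPP⟩ := exists_proj_matrix W
  have hQP : ∀ φ : Γ, Qmat φ.val * P = P * Qmat φ.val := fun φ => proj_comm hWinv h1 h2 h3 φ
  have hQM : ∀ φ : Γ, Qmat φ.val * M = M * (T φ)ᵀ := fun φ => rep_matrix hT.2 φ
  set B := P * M with hB
  set A := Mᵀ * B with hA
  have hAsym : Aᵀ = A := by
    rw [hA, hB, Matrix.transpose_mul, Matrix.transpose_mul, Matrix.transpose_transpose,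
      hPsym, Matrix.mul_assoc]
  have hBtB : Bᵀ * B = A := by
    rw [hB, hA, Matrix.transpose_mul, hPsym, Matrix.mul_assoc, ← Matrix.mul_assoc P P M, hPP]
  -- M * T φ = Qmat φ.val⁻¹ * M
  have hQM2 : ∀ φ : Γ, Qmat φ.val⁻¹ * M = M * T φ := by
    intro φ
    have h := hQM φ⁻¹
    rw [rep_T_inv hT.1, Matrix.transpose_transpose] at h
    exact h
  have hMQT : ∀ φ : Γ, Mᵀ * Qmat φ.val⁻¹ = T φ * Mᵀ := by
    intro φ
    have h := congrArg Matrix.transpose (hQM φ)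
    rw [Matrix.transpose_mul, Matrix.transpose_mul, Matrix.transpose_transpose,
      Qmat_transpose] at h
    exact h
  have hcomm : ∀ φ : Γ, A * T φ = T φ * A := by
    intro φ
    have hQPinv : P * Qmat φ.val⁻¹ = Qmat φ.val⁻¹ * P := (hQP φ⁻¹).symm
    calc A * T φ = Mᵀ * (P * (M * T φ)) := by
          rw [hA, hB, Matrix.mul_assoc, Matrix.mul_assoc]
      _ = Mᵀ * (P * (Qmat φ.val⁻¹ * M)) := by rw [← hQM2 φ]
      _ = Mᵀ * (Qmat φ.val⁻¹ * (P * M)) := by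
          rw [← Matrix.mul_assoc P, hQPinv, Matrix.mul_assoc]
      _ = (Mᵀ * Qmat φ.val⁻¹) * (P * M) := by rw [Matrix.mul_assoc]
      _ = (T φ * Mᵀ) * (P * M) := by rw [hMQT]
      _ = T φ * A := by rw [hA, hB, Matrix.mul_assoc]
  obtain ⟨lam, hAlam⟩ := scalar_of_commute hTirr hd A hAsym hcomm
  -- quadratic form
  have quad : ∀ x : Fin d → ℝ, x ⬝ᵥ (A *ᵥ x) = (B *ᵥ x) ⬝ᵥ (B *ᵥ x) := by
    intro x
    rw [← hBtB, ← Matrix.mulVec_mulVec, dot_mulVec_rect]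
  let j0 : Fin d := ⟨0, hd⟩
  have hsingle : (Pi.single j0 1 : Fin d → ℝ) ⬝ᵥ Pi.single j0 1 = 1 := by
    simp [dotProduct, Pi.single_apply]
  have hlamval : (Pi.single j0 1 : Fin d → ℝ) ⬝ᵥ (A *ᵥ Pi.single j0 1) = lam := by
    rw [hAlam, Matrix.smul_mulVec, Matrix.one_mulVec, dotProduct_smul,
      hsingle]
    simp
  have hlam_nonneg : 0 ≤ lam := by
    rw [← hlamval, quad]
    exact Finset.sum_nonneg fun i _ => mul_self_nonneg _
  have hlam_ne : lam ≠ 0 := by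
    intro h0
    apply hWorth
    have hAzero : A = 0 := by rw [hAlam, h0, zero_smul]
    have hBzero : ∀ x, B *ᵥ x = 0 := by
      intro x
      rw [← dotProduct_self_eq_zero, ← quad, hAzero, Matrix.zero_mulVec,
        dotProduct_zero]
    apply orthSpaces_of_cols
    intro j w hw
    have hcol : (arrMat v)ᵀ j = M *ᵥ Pi.single j 1 := by
      funext i; rw [mulVec_single_col]; rfl
    have hPcol : P *ᵥ ((arrMat v)ᵀ j) = 0 := by
      rw [hcol, Matrix.mulVec_mulVec]
      exact hBzero _
    have := h3 ((arrMat v)ᵀ j) w hw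
    rwa [hPcol, sub_zero] at this
  have hlam_pos : 0 < lam := lt_of_le_of_ne hlam_nonneg (Ne.symm hlam_ne)
  set μ := Real.sqrt lam with hmu
  have hmu_pos : 0 < μ := Real.sqrt_pos.mpr hlam_pos
  have hmusq : μ * μ = lam := Real.mul_self_sqrt hlam_nonneg
  -- the second arrangement
  set vb : Fin n → Fin d → ℝ := fun i j => μ⁻¹ * B i j with hvb
  set Mb := arrMat vb with hMbdef
  have hMb : Mb = μ⁻¹ • B := by
    ext i j; simp [hMbdef, arrMat, hvb, Matrix.smul_apply, smul_eq_mul]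
  have hMbtMb : Mbᵀ * Mb = 1 := by
    rw [hMb, Matrix.transpose_smul, Matrix.smul_mul, Matrix.mul_smul, hBtB, hAlam,
      smul_smul, smul_smul]
    have : μ⁻¹ * μ⁻¹ * lam = 1 := by
      rw [← hmusq]; field_simp
    rw [this, one_smul]
  have hMtB : Mᵀ * B = A := hA.symm ▸ rfl
  have hBtM : Bᵀ * M = A := by
    rw [hB, Matrix.transpose_mul, hPsym, Matrix.mul_assoc, ← hB]
  have hmulam : μ⁻¹ * lam = μ := by
    field_simp [← hmusq]
    rw [← hmusq]; ring
  have hMtMb : Mᵀ * Mb = μ • 1 := by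
    rw [hMb, Matrix.mul_smul, ← hA, hAlam, smul_smul, hmulam]
  have hMbtM : Mbᵀ * M = μ • 1 := by
    rw [hMb, Matrix.transpose_smul, Matrix.smul_mul, hBtM, hAlam, smul_smul, hmulam]
  have hQMb : ∀ φ : Γ, Qmat φ.val * Mb = Mb * (T φ)ᵀ := by
    intro φ
    rw [hMb, Matrix.mul_smul, Matrix.smul_mul]
    congr 1
    calc Qmat φ.val * B = (Qmat φ.val * P) * M := by rw [hB, Matrix.mul_assoc]
      _ = P * (Qmat φ.val * M) := by rw [hQP, Matrix.mul_assoc]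
      _ = P * (M * (T φ)ᵀ) := by rw [hQM]
      _ = B * (T φ)ᵀ := by rw [hB, Matrix.mul_assoc]
  -- the deformation path
  set a : ℝ → ℝ := fun t => Real.cos (Real.pi * t / 2) with hadef
  set b : ℝ → ℝ := fun t => Real.sin (Real.pi * t / 2) with hbdef
  set s : ℝ → ℝ := fun t => 1 + μ * Real.sin (Real.pi * t) with hsdef
  set r : ℝ → ℝ := fun t => (Real.sqrt (s t))⁻¹ with hrdef
  set c : ℝ → (Fin n → Fin d → ℝ) := fun t i j => r t * (a t * v i j + b t * vb i j)
    with hcdef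
  have hs_pos : ∀ t ∈ Set.Icc (0:ℝ) 1, 0 < s t := by
    intro t ht
    have hsin : 0 ≤ Real.sin (Real.pi * t) :=
      Real.sin_nonneg_of_nonneg_of_le_pi (mul_nonneg Real.pi_pos.le ht.1)
        (by nlinarith [Real.pi_pos, ht.2, ht.1])
    have hprod : 0 ≤ μ * Real.sin (Real.pi * t) := mul_nonneg hmu_pos.le hsin
    rw [hsdef]
    dsimp only
    linarith
  have hMt : ∀ t, arrMat (c t) = (r t * a t) • M + (r t * b t) • Mb := by
    intro t; ext i j
    show r t * (a t * v i j + b t * vb i j) = _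
    have hM' : M i j = v i j := rfl
    have hMb' : Mb i j = vb i j := rfl
    rw [Matrix.add_apply, Matrix.smul_apply, Matrix.smul_apply, smul_eq_mul, smul_eq_mul,
      hM', hMb']
    ring
  have hnorm : ∀ t ∈ Set.Icc (0:ℝ) 1, IsNormalized (c t) := by
    intro t ht
    show (arrMat (c t))ᵀ * arrMat (c t) = 1
    rw [hMt t]
    set α := r t * a t with hα
    set β := r t * b t with hβ
    have hab : a t^2 + b t^2 = 1 := by
      rw [hadef, hbdef]; exact Real.cos_sq_add_sin_sq _
    have h2ab : 2 * Real.sin (Real.pi * t / 2) * Real.cos (Real.pi * t / 2)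
        = Real.sin (Real.pi * t) := by
      rw [← Real.sin_two_mul]
      congr 1
      ring
    have hssq : Real.sqrt (s t) * Real.sqrt (s t) = s t := Real.mul_self_sqrt (hs_pos t ht).le
    have hsne : Real.sqrt (s t) ≠ 0 := ne_of_gt (Real.sqrt_pos.mpr (hs_pos t ht))
    have hr2 : r t * r t * s t = 1 := by
      rw [hrdef]
      dsimp only
      rw [← hssq]
      field_simp
      rw [Real.sqrt_sq (Real.sqrt_nonneg _)]
    have hsc : (α*α) + ((α*β)*μ + ((β*α)*μ + (β*β))) = 1 := by
      have e1 : (α*α) + ((α*β)*μ + ((β*α)*μ + (β*β)))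
          = (r t * r t) * ((a t^2 + b t^2) + μ * (2 * b t * a t)) := by
        rw [hα, hβ]; ring
      rw [e1, hab]
      have e2 : (2 : ℝ) * b t * a t = Real.sin (Real.pi * t) := by
        rw [hbdef, hadef]
        exact h2ab
      rw [e2]
      have e3 : (1 : ℝ) + μ * Real.sin (Real.pi * t) = s t := by rw [hsdef]
      rw [e3, hr2]
    calc (α • M + β • Mb)ᵀ * (α • M + β • Mb)
        = (α*α)•(Mᵀ*M) + ((α*β)•(Mᵀ*Mb) + ((β*α)•(Mbᵀ*M) + (β*β)•(Mbᵀ*Mb))) := by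
          rw [Matrix.transpose_add, Matrix.transpose_smul, Matrix.transpose_smul,
            Matrix.add_mul, Matrix.smul_mul, Matrix.smul_mul,
            Matrix.mul_add, Matrix.mul_add, Matrix.mul_smul, Matrix.mul_smul,
            Matrix.mul_smul, Matrix.mul_smul,
            smul_add, smul_add, smul_smul, smul_smul, smul_smul, smul_smul, add_assoc]
      _ = ((α*α) + ((α*β)*μ + ((β*α)*μ + (β*β)))) • (1 : Matrix (Fin d) (Fin d) ℝ) := by
          rw [hN, hMtMb, hMbtM, hMbtMb, smul_smul, smul_smul, ← add_smul, ← add_smul,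
            ← add_smul]
      _ = 1 := by rw [hsc, one_smul]
  have hccont : ContinuousOn c (Set.Icc 0 1) := by
    apply continuousOn_pi.mpr; intro i
    apply continuousOn_pi.mpr; intro j
    have hscont : Continuous s := by
      rw [hsdef]
      exact continuous_const.add (continuous_const.mul
        (Real.continuous_sin.comp (continuous_const.mul continuous_id)))
    have hacont : Continuous a := by
      rw [hadef]
      exact Real.continuous_cos.comp ((continuous_const.mul continuous_id).div_const 2)
    have hbcont : Continuous b := by
      rw [hbdef]
      exact Real.continuous_sin.comp ((continuous_const.mul continuous_id).div_const 2)
    have hrcont : ContinuousOn r (Set.Icc 0 1) := by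
      rw [hrdef]
      apply ContinuousOn.inv₀
      · exact (Real.continuous_sqrt.comp hscont).continuousOn
      · intro t ht; exact ne_of_gt (Real.sqrt_pos.mpr (hs_pos t ht))
    exact hrcont.mul (((hacont.mul continuous_const).add
      (hbcont.mul continuous_const)).continuousOn)
  have hvbeq : ∀ (φ : Γ) (i : Fin n), T φ *ᵥ vb i = vb (φ.val i) := by
    intro φ
    exact rep_pointwise φ (hQMb φ)
  have hci : ∀ t i', c t i' = (r t * a t) • v i' + (r t * b t) • vb i' := by
    intro t i'; funext j
    show r t * (a t * v i' j + b t * vb i' j) = _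
    rw [Pi.add_apply, Pi.smul_apply, Pi.smul_apply, smul_eq_mul, smul_eq_mul]
    ring
  have hmem : ∀ t ∈ Set.Icc (0:ℝ) 1, c t ∈ SdSet n d Γ := by
    intro t ht
    refine ⟨hnorm t ht, T, hT.1, ?_⟩
    intro φ i
    rw [hci t i, Matrix.mulVec_add, Matrix.mulVec_smul, Matrix.mulVec_smul, hT.2 φ i,
      hvbeq φ i, hci t (φ.val i)]
  have hc0 : c 0 = v := by
    funext i j
    show r 0 * (a 0 * v i j + b 0 * vb i j) = v i j
    have ha0 : a 0 = 1 := by rw [hadef]; norm_num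
    have hb0 : b 0 = 0 := by rw [hbdef]; norm_num
    have hs0 : s 0 = 1 := by rw [hsdef]; norm_num
    have hr0 : r 0 = 1 := by rw [hrdef]; dsimp only; rw [hs0, Real.sqrt_one, inv_one]
    rw [ha0, hb0, hr0]
    ring
  have hc1 : c 1 = vb := by
    funext i j
    show r 1 * (a 1 * v i j + b 1 * vb i j) = vb i j
    have harg : Real.pi * 1 / 2 = Real.pi / 2 := by ring
    have ha1 : a 1 = 0 := by rw [hadef]; dsimp only; rw [harg, Real.cos_pi_div_two]
    have hb1 : b 1 = 1 := by rw [hbdef]; dsimp only; rw [harg, Real.sin_pi_div_two]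
    have hs1 : s 1 = 1 := by rw [hsdef]; dsimp only; rw [mul_one, Real.sin_pi, mul_zero, add_zero]
    have hr1 : r 1 = 1 := by rw [hrdef]; dsimp only; rw [hs1, Real.sqrt_one, inv_one]
    rw [ha1, hb1, hr1]
    ring
  have hfrb : Module.finrank ℝ (arrSpace vb) = d := finrank_arrSpace hMbtMb
  have hnoneq : ¬ AreEquivalent v vb := by
    rintro ⟨X, hXdet, hXv⟩
    have hle1 : arrSpace vb ≤ W := by
      rw [arrSpace]
      apply Submodule.span_le.mpr
      rintro x ⟨j, rfl⟩
      have hcol : (arrMat vb)ᵀ j = μ⁻¹ • (P *ᵥ ((arrMat v)ᵀ j)) := by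
        funext i
        show vb i j = μ⁻¹ * (P *ᵥ ((arrMat v)ᵀ j)) i
        show μ⁻¹ * B i j = _
        congr 1
      rw [hcol]
      exact Submodule.smul_mem _ _ (h1 _)
    have hWeq : arrSpace vb = W := Submodule.eq_of_le_of_finrank_le hle1
      (by rw [hWrank, hfrb])
    have hle2 : arrSpace vb ≤ arrSpace v := by
      apply Submodule.span_le.mpr
      rintro x ⟨j, rfl⟩
      have hcol : (arrMat vb)ᵀ j = (arrMat v) *ᵥ (fun k => X j k) := by
        funext i
        show vb i j = _
        have h5 := congrFun (hXv i) j
        rw [← h5]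
        simp [Matrix.mulVec, dotProduct, arrMat, mul_comm]
      rw [hcol]
      exact mulVec_mem_arrSpace v _
    have hVeq : arrSpace vb = arrSpace v :=
      Submodule.eq_of_le_of_finrank_le hle2 (by rw [finrank_arrSpace hv.1, hfrb])
    exact hWne (by rw [← hWeq, hVeq])
  exact ⟨vb, ⟨c, hccont, hmem, hc0, hc1⟩, hnoneq⟩


end Dir2

theorem stmt13 {n d : ℕ} (Γ : Subgroup (Equiv.Perm (Fin n)))
    (v : Fin n → Fin d → ℝ) (hv : v ∈ SdSet n d Γ)
    (T : Γ → Matrix (Fin d) (Fin d) ℝ)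
    (hT : IsRepOf Γ T v) (hTirr : IrredRep Γ T) :
    Flexible Γ v ↔
      ∃ W : Submodule ℝ (Fin n → ℝ), GammaInvariant Γ W ∧
        Module.finrank ℝ W = d ∧ W ≠ arrSpace v ∧ ¬ OrthSpaces (arrSpace v) W := by
  rcases Nat.eq_zero_or_pos d with hd0 | hd
  · subst hd0
    constructor
    · rintro ⟨w, hdef, hne⟩
      exact absurd ⟨1, by rw [Matrix.det_one]; norm_num,
        fun i => funext fun j => j.elim0⟩ hne
    · rintro ⟨W, hWinv, hWrank, hWne, hWorth⟩
      exfalso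
      have hW : W = ⊥ := Submodule.finrank_eq_zero.mp hWrank
      have hU : arrSpace v = ⊥ := by
        rw [arrSpace]
        have hr : (Set.range (arrMat v)ᵀ) = ∅ := Set.range_eq_empty _
        rw [hr, Submodule.span_empty]
      exact hWne (by rw [hW, hU])
  · constructor
    · intro hflex
      by_contra hno
      push_neg at hno
      exact direction1 hd Γ v hv (fun W hA hB => by
        by_cases hC : W = arrSpace v
        · exact Or.inl hC
        · exact Or.inr (hno W hA hB hC)) hflex
    · rintro ⟨W, hWinv, hWrank, hWne, hWorth⟩
      exact direction2 hd Γ v hv T hT hTirr W hWinv hWrank hWne hWorth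
end
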